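/- arXiv:1907.07848 — 8 statements merged into one kernel-verified Lean document; each statement's English description precedes it below -/
import Mathlib

section
/- Let d, n be positive integers with n ≥ d, and let Φ = (φ_1, …, φ_n) be a family of unit vectors in 𝔽^d (𝔽 = ℝ or ℂ) that minimizes coherence among all families of n unit vectors in 𝔽^d, i.e., μ(Φ) ≤ μ(Ψ) for every family Ψ of n unit vectors in 𝔽^d. Then Φ spans 𝔽^d (i.e., Φ is a frame for 𝔽^d). -/
set_option maxHeartbeats 1000000


/-- The coherence of a family of vectors `Φ` in `𝕜^d`:
`μ(Φ) = max_{j ≠ k} |⟨φ_j, φ_k⟩|` (equal to the max over `j < k` by symmetry),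
with the convention that the coherence of a single vector is `0`. -/
noncomputable def coherence {𝕜 : Type*} [RCLike 𝕜] {d n : ℕ}
    (Φ : Fin n → EuclideanSpace 𝕜 (Fin d)) : ℝ :=
  ((Finset.univ.filter fun p : Fin n × Fin n => p.1 ≠ p.2).sup
    fun p => ‖(inner 𝕜 (Φ p.1) (Φ p.2) : 𝕜)‖₊ : NNReal)

/-- Key real inequality: for the tilting angles we use, the coherence bound
`cos a * cos b * μ + sin a * sin b` stays strictly below `μ`. -/
private lemma key_ineq {μ a b : ℝ} (hμ0 : 0 < μ) (hμ1 : μ ≤ 1)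
    (ha0 : 0 < a) (ha1 : a ≤ 1) (hb0 : 0 < b) (hba : b ≤ (μ / 6) * a) :
    Real.cos a * Real.cos b * μ + Real.sin a * Real.sin b < μ := by
  have hpi : (3 : ℝ) < Real.pi := Real.pi_gt_three
  have hb1 : b ≤ 1 := by nlinarith
  have hcosa : Real.cos a ≤ 1 - 2 / Real.pi ^ 2 * a ^ 2 :=
    Real.cos_le_one_sub_mul_cos_sq (by rw [abs_of_pos ha0]; linarith)
  have hcosb1 : Real.cos b ≤ 1 := Real.cos_le_one b
  have hcosa0 : 0 ≤ Real.cos a :=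
    Real.cos_nonneg_of_mem_Icc ⟨by linarith, by linarith⟩
  have hsina : Real.sin a ≤ a := Real.sin_le ha0.le
  have hsinb : Real.sin b ≤ b := Real.sin_le hb0.le
  have hsina0 : 0 ≤ Real.sin a := Real.sin_nonneg_of_nonneg_of_le_pi ha0.le (by linarith)
  have hsinb0 : 0 ≤ Real.sin b := Real.sin_nonneg_of_nonneg_of_le_pi hb0.le (by linarith)
  have h1 : Real.sin a * Real.sin b ≤ (μ / 6) * a ^ 2 := by
    calc Real.sin a * Real.sin b ≤ a * b := mul_le_mul hsina hsinb hsinb0 ha0.le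
      _ ≤ a * ((μ / 6) * a) := mul_le_mul_of_nonneg_left hba ha0.le
      _ = (μ / 6) * a ^ 2 := by ring
  have h2 : Real.cos a * Real.cos b * μ ≤ (1 - 2 / Real.pi ^ 2 * a ^ 2) * μ := by
    have hcc : Real.cos a * Real.cos b ≤ 1 - 2 / Real.pi ^ 2 * a ^ 2 := by
      calc Real.cos a * Real.cos b ≤ Real.cos a * 1 :=
            mul_le_mul_of_nonneg_left hcosb1 hcosa0
        _ = Real.cos a := mul_one _
        _ ≤ _ := hcosa
    exact mul_le_mul_of_nonneg_right hcc hμ0.le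
  have hπ2 : Real.pi ^ 2 < 12 := by nlinarith [Real.pi_lt_d2]
  have hfrac : (1 : ℝ) / 6 < 2 / Real.pi ^ 2 := by
    rw [div_lt_div_iff₀ (by norm_num) (by positivity)]
    linarith
  have ha2 : 0 < a ^ 2 := by positivity
  have h3 : μ * a ^ 2 * (1 / 6) < μ * a ^ 2 * (2 / Real.pi ^ 2) :=
    mul_lt_mul_of_pos_left hfrac (mul_pos hμ0 ha2)
  nlinarith [h1, h2, h3]

/-- A Grassmannian frame (a coherence-minimizing family of `n ≥ d` unit vectors
in `𝔽^d`, `𝔽 = ℝ` or `ℂ`) spans `𝔽^d`, i.e., it is a frame. -/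
theorem grassmannian_frame_spans {𝕜 : Type*} [RCLike 𝕜] {d n : ℕ}
    (hd : 0 < d) (hn : d ≤ n)
    (Φ : Fin n → EuclideanSpace 𝕜 (Fin d))
    (hunit : ∀ j, ‖Φ j‖ = 1)
    (hmin : ∀ Ψ : Fin n → EuclideanSpace 𝕜 (Fin d),
      (∀ j, ‖Ψ j‖ = 1) → coherence Φ ≤ coherence Ψ) :
    Submodule.span 𝕜 (Set.range Φ) = ⊤ := by
  classical
  set S : Finset (Fin n × Fin n) :=
    Finset.univ.filter fun p : Fin n × Fin n => p.1 ≠ p.2 with hS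
  set F : Fin n × Fin n → NNReal := fun p => ‖(inner 𝕜 (Φ p.1) (Φ p.2) : 𝕜)‖₊ with hF
  have hμdef : coherence Φ = ((S.sup F : NNReal) : ℝ) := rfl
  have hpair : ∀ j k : Fin n, j ≠ k → F (j, k) ≤ S.sup F := by
    intro j k hjk
    exact Finset.le_sup (by simp [hS, hjk])
  by_cases hμ0 : S.sup F = 0
  · -- orthonormal case: the vectors are linearly independent, n = d, so they span
    have horth : Orthonormal 𝕜 Φ := by
      rw [orthonormal_iff_ite]
      intro i j
      by_cases hij : i = j
      · subst hij
        simp [inner_self_eq_norm_sq_to_K, hunit i]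
      · have := hpair i j hij
        rw [hμ0, le_zero_iff] at this
        have : ‖(inner 𝕜 (Φ i) (Φ j) : 𝕜)‖₊ = 0 := this
        simp_all [nnnorm_eq_zero]
    have hli := horth.linearIndependent
    have hcard : n ≤ d := by
      have := hli.fintype_card_le_finrank
      simpa [finrank_euclideanSpace_fin] using this
    have hnd : n = d := le_antisymm hcard hn
    have : Nonempty (Fin n) := ⟨⟨0, by omega⟩⟩
    exact hli.span_eq_top_of_card_eq_finrank (by simp [finrank_euclideanSpace_fin, hnd])
  · -- positive coherence case
    by_contra hspan
    set K : Submodule 𝕜 (EuclideanSpace 𝕜 (Fin d)) := Submodule.span 𝕜 (Set.range Φ) with hK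
    have hKbot : Kᗮ ≠ ⊥ := fun h => hspan (Submodule.orthogonal_eq_bot_iff.mp h)
    obtain ⟨v, hvK, hv0⟩ := Submodule.exists_mem_ne_zero_of_ne_bot hKbot
    set e : EuclideanSpace 𝕜 (Fin d) := ((‖v‖⁻¹ : ℝ) : 𝕜) • v with he
    have hnv : ‖v‖ ≠ 0 := norm_ne_zero_iff.mpr hv0
    have hee : ‖e‖ = 1 := by
      rw [he, norm_smul, RCLike.norm_ofReal, abs_of_nonneg (by positivity), inv_mul_cancel₀ hnv]
    have heK : e ∈ Kᗮ := Submodule.smul_mem _ _ hvK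
    have hΦK : ∀ j, Φ j ∈ K := fun j => Submodule.subset_span ⟨j, rfl⟩
    have hΦe : ∀ j, (inner 𝕜 (Φ j) e : 𝕜) = 0 := fun j =>
      Submodule.inner_right_of_mem_orthogonal (hΦK j) heK
    have heΦ : ∀ j, (inner 𝕜 e (Φ j) : 𝕜) = 0 := fun j =>
      Submodule.inner_left_of_mem_orthogonal (hΦK j) heK
    set μ : ℝ := ((S.sup F : NNReal) : ℝ) with hμ
    have hμpos : 0 < μ := by
      rw [hμ]
      exact_mod_cast pos_iff_ne_zero.mpr hμ0
    have hμ1 : μ ≤ 1 := by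
      rw [hμ]
      have : S.sup F ≤ 1 := by
        apply Finset.sup_le
        intro p _
        have := norm_inner_le_norm (𝕜 := 𝕜) (Φ p.1) (Φ p.2)
        rw [hunit, hunit, one_mul] at this
        exact_mod_cast this
      exact_mod_cast this
    have hpair' : ∀ j k : Fin n, j ≠ k → ‖(inner 𝕜 (Φ j) (Φ k) : 𝕜)‖ ≤ μ := by
      intro j k hjk
      have := hpair j k hjk
      rw [hμ]
      exact_mod_cast this
    -- tilting angles
    set t : ℝ := μ / 6 with ht
    have ht0 : 0 < t := by positivity
    have ht1 : t ≤ 1 / 6 := by rw [ht]; linarith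
    set θ : Fin n → ℝ := fun j => t ^ (j.val + 1) with hθ
    have hθ0 : ∀ j, 0 < θ j := fun j => pow_pos ht0 _
    have hθ1 : ∀ j, θ j ≤ 1 := by
      intro j
      calc θ j ≤ 1 ^ (j.val + 1) := pow_le_pow_left₀ ht0.le (by linarith) _
        _ = 1 := one_pow _
    -- the tilted family
    set Ψ : Fin n → EuclideanSpace 𝕜 (Fin d) := fun j =>
      ((Real.cos (θ j) : 𝕜)) • Φ j + ((Real.sin (θ j) : 𝕜)) • e with hΨ
    have hcosn : ∀ j, 0 ≤ Real.cos (θ j) := by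
      intro j
      apply Real.cos_nonneg_of_mem_Icc
      constructor
      · linarith [(hθ0 j).le, Real.pi_gt_three]
      · linarith [hθ1 j, Real.pi_gt_three]
    have hsinn : ∀ j, 0 ≤ Real.sin (θ j) := fun j =>
      Real.sin_nonneg_of_nonneg_of_le_pi (hθ0 j).le (by linarith [hθ1 j, Real.pi_gt_three])
    have hΨunit : ∀ j, ‖Ψ j‖ = 1 := by
      intro j
      have hcross : (inner 𝕜 ((Real.cos (θ j) : 𝕜) • Φ j) ((Real.sin (θ j) : 𝕜) • e) : 𝕜) = 0 := by
        rw [inner_smul_left, inner_smul_right, hΦe j]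
        ring
      have hsq : ‖Ψ j‖ ^ 2 = 1 := by
        rw [hΨ]
        rw [norm_add_sq (𝕜 := 𝕜), hcross]
        simp only [map_zero, mul_zero, add_zero]
        rw [norm_smul, norm_smul, RCLike.norm_ofReal, RCLike.norm_ofReal, hunit j, hee]
        rw [abs_of_nonneg (hcosn j), abs_of_nonneg (hsinn j)]
        simp only [mul_one]
        exact Real.cos_sq_add_sin_sq _
      have h0 : 0 ≤ ‖Ψ j‖ := norm_nonneg _
      nlinarith
    -- inner products of the tilted family
    have hinner : ∀ j k : Fin n, (inner 𝕜 (Ψ j) (Ψ k) : 𝕜) =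
        ((Real.cos (θ j) * Real.cos (θ k) : ℝ) : 𝕜) * inner 𝕜 (Φ j) (Φ k)
          + ((Real.sin (θ j) * Real.sin (θ k) : ℝ) : 𝕜) := by
      intro j k
      rw [hΨ]
      simp only [inner_add_left, inner_add_right, inner_smul_left, inner_smul_right,
        hΦe, heΦ, RCLike.conj_ofReal]
      rw [inner_self_eq_norm_sq_to_K, hee]
      push_cast
      ring
    -- norm bound on inner products
    have hbound : ∀ j k : Fin n, j ≠ k → ‖(inner 𝕜 (Ψ j) (Ψ k) : 𝕜)‖ < μ := by
      intro j k hjk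
      have hΨjk : ‖(inner 𝕜 (Ψ j) (Ψ k) : 𝕜)‖ ≤
          Real.cos (θ j) * Real.cos (θ k) * ‖(inner 𝕜 (Φ j) (Φ k) : 𝕜)‖
            + Real.sin (θ j) * Real.sin (θ k) := by
        rw [hinner j k]
        calc ‖((Real.cos (θ j) * Real.cos (θ k) : ℝ) : 𝕜) * (inner 𝕜 (Φ j) (Φ k) : 𝕜)
              + ((Real.sin (θ j) * Real.sin (θ k) : ℝ) : 𝕜)‖
            ≤ ‖((Real.cos (θ j) * Real.cos (θ k) : ℝ) : 𝕜) * (inner 𝕜 (Φ j) (Φ k) : 𝕜)‖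
              + ‖((Real.sin (θ j) * Real.sin (θ k) : ℝ) : 𝕜)‖ := norm_add_le _ _
          _ = |Real.cos (θ j) * Real.cos (θ k)| * ‖(inner 𝕜 (Φ j) (Φ k) : 𝕜)‖
              + |Real.sin (θ j) * Real.sin (θ k)| := by
              rw [norm_mul, RCLike.norm_ofReal, RCLike.norm_ofReal]
          _ = _ := by
              rw [abs_of_nonneg (mul_nonneg (hcosn j) (hcosn k)),
                abs_of_nonneg (mul_nonneg (hsinn j) (hsinn k))]
      have hcc : Real.cos (θ j) * Real.cos (θ k) * ‖(inner 𝕜 (Φ j) (Φ k) : 𝕜)‖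
            + Real.sin (θ j) * Real.sin (θ k)
          ≤ Real.cos (θ j) * Real.cos (θ k) * μ + Real.sin (θ j) * Real.sin (θ k) := by
        have := hpair' j k hjk
        nlinarith [mul_nonneg (hcosn j) (hcosn k)]
      -- reduce to the key inequality, with wlog on which θ is bigger
      have hkey : Real.cos (θ j) * Real.cos (θ k) * μ + Real.sin (θ j) * Real.sin (θ k) < μ := by
        have hvne : j.val ≠ k.val := fun h => hjk (Fin.ext h)
        rcases lt_or_gt_of_ne hvne with h | h
        · -- j < k : θ k ≤ t * θ j
          have hle : θ k ≤ t * θ j := by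
            rw [hθ]
            simp only
            calc t ^ (k.val + 1) ≤ t ^ (j.val + 2) :=
                  pow_le_pow_of_le_one ht0.le (by linarith) (by omega)
              _ = t * t ^ (j.val + 1) := by ring
          exact key_ineq hμpos hμ1 (hθ0 j) (hθ1 j) (hθ0 k) (by rw [ht] at hle; exact hle)
        · -- k < j : θ j ≤ t * θ k
          have hle : θ j ≤ t * θ k := by
            rw [hθ]
            simp only
            calc t ^ (j.val + 1) ≤ t ^ (k.val + 2) :=
                  pow_le_pow_of_le_one ht0.le (by linarith) (by omega)
              _ = t * t ^ (k.val + 1) := by ring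
          have := key_ineq hμpos hμ1 (hθ0 k) (hθ1 k) (hθ0 j) (by rw [ht] at hle; exact hle)
          linarith [this, mul_comm (Real.cos (θ j)) (Real.cos (θ k)),
            mul_comm (Real.sin (θ j)) (Real.sin (θ k))]
      linarith
    -- coherence of Ψ is strictly less than μ : contradiction with minimality
    have hcohΨ : coherence Ψ < μ := by
      have hμnn : (0 : NNReal) < S.sup F := pos_iff_ne_zero.mpr hμ0
      have : (Finset.univ.filter fun p : Fin n × Fin n => p.1 ≠ p.2).sup
          (fun p => ‖(inner 𝕜 (Ψ p.1) (Ψ p.2) : 𝕜)‖₊) < S.sup F := by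
        rw [Finset.sup_lt_iff (by exact_mod_cast hμnn)]
        intro p hp
        have hpne : p.1 ≠ p.2 := by simpa using hp
        have := hbound p.1 p.2 hpne
        rw [hμ] at this
        exact_mod_cast this
      rw [coherence, hμ]
      exact_mod_cast this
    have := hmin Ψ hΨunit
    rw [hμdef] at this
    linarith
end

section
/- Let d, n be positive integers with n > d, and let Φ = (φ_1, …, φ_n) be a family of unit vectors in 𝔽^d (𝔽 = ℝ or ℂ) that minimizes coherence among all families of n unit vectors in 𝔽^d. Then there exists an index j ∈ {1, …, n} such that the vectors φ_k with |⟨φ_j, φ_k⟩| = μ(Φ) (k ≠ j) span 𝔽^d. -/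
lemma norm_inner_le_coherence {𝕜 : Type*} [RCLike 𝕜] {d n : ℕ}
    (Φ : Fin n → EuclideanSpace 𝕜 (Fin d)) {j k : Fin n}
    (h : j ≠ k) : ‖(inner 𝕜 (Φ j) (Φ k) : 𝕜)‖ ≤ coherence Φ := by
  have hm : (j, k) ∈ Finset.univ.filter (fun p : Fin n × Fin n => p.1 ≠ p.2) := by
    simp [h]
  have := Finset.le_sup (f := fun p : Fin n × Fin n => ‖(inner 𝕜 (Φ p.1) (Φ p.2) : 𝕜)‖₊) hm
  rw [coherence]
  exact_mod_cast this

lemma coherence_lt_of_forall {𝕜 : Type*} [RCLike 𝕜] {d n : ℕ}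
    (Ψ : Fin n → EuclideanSpace 𝕜 (Fin d)) {c : ℝ} (hc : 0 < c)
    (h : ∀ j k : Fin n, j ≠ k → ‖(inner 𝕜 (Ψ j) (Ψ k) : 𝕜)‖ < c) : coherence Ψ < c := by
  lift c to NNReal using hc.le
  rw [coherence, NNReal.coe_lt_coe]
  rw [Finset.sup_lt_iff (by exact_mod_cast hc)]
  intro p hp
  have hp' : p.1 ≠ p.2 := by simpa using hp
  have := h p.1 p.2 hp'
  rw [← NNReal.coe_lt_coe, coe_nnnorm]
  exact this

lemma coherence_pos {𝕜 : Type*} [RCLike 𝕜] {d n : ℕ} (hn : d < n)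
    (Φ : Fin n → EuclideanSpace 𝕜 (Fin d)) (hunit : ∀ j, ‖Φ j‖ = 1) :
    0 < coherence Φ := by
  have h0 : (0:ℝ) ≤ coherence Φ := by
    rw [coherence]; exact NNReal.coe_nonneg _
  rcases h0.lt_or_eq with h | h
  · exact h
  · exfalso
    have horth : Orthonormal 𝕜 Φ := by
      rw [orthonormal_iff_ite]
      intro j k
      by_cases hjk : j = k
      · subst hjk
        simp only [if_pos rfl]
        rw [@inner_self_eq_norm_sq_to_K 𝕜, hunit]
        norm_num
      · simp only [if_neg hjk]
        have := norm_inner_le_coherence Φ hjk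
        rw [← h] at this
        exact norm_le_zero_iff.mp this
    have := horth.linearIndependent.fintype_card_le_finrank
    rw [finrank_euclideanSpace_fin, Fintype.card_fin] at this
    omega

lemma step_lemma {𝕜 : Type*} [RCLike 𝕜] {E : Type*} [NormedAddCommGroup E]
    [InnerProductSpace 𝕜 E] {n : ℕ}
    {μ : ℝ} (hμ : 0 < μ) (Ψ : Fin n → E) (i : Fin n)
    (hunit : ∀ j, ‖Ψ j‖ = 1)
    (hle : ∀ j k, j ≠ k → ‖(inner 𝕜 (Ψ j) (Ψ k) : 𝕜)‖ ≤ μ)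
    (ψ : E) (hψ : ‖ψ‖ = 1) (hre : 0 ≤ RCLike.re (inner 𝕜 (Ψ i) ψ : 𝕜))
    (horth : ∀ k, k ≠ i → ‖(inner 𝕜 (Ψ i) (Ψ k) : 𝕜)‖ = μ → (inner 𝕜 ψ (Ψ k) : 𝕜) = 0) :
    ∃ Ψ' : Fin n → E, (∀ j, ‖Ψ' j‖ = 1) ∧ (∀ k, k ≠ i → Ψ' k = Ψ k) ∧
      (∀ k, k ≠ i → ‖(inner 𝕜 (Ψ' i) (Ψ' k) : 𝕜)‖ < μ) ∧
      (∀ j k, j ≠ k → ‖(inner 𝕜 (Ψ' j) (Ψ' k) : 𝕜)‖ ≤ μ) := by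
  classical
  set T : Finset (Fin n) := Finset.univ.filter (· ≠ i) with hT
  by_cases hTne : T.Nonempty
  swap
  · exact ⟨Ψ, hunit, fun k _ => rfl,
      fun k hk => absurd ⟨k, by simp [hT, hk]⟩ hTne, hle⟩
  set e : Fin n → ℝ := fun k =>
    if ‖(inner 𝕜 (Ψ i) (Ψ k) : 𝕜)‖ < μ then μ - ‖(inner 𝕜 (Ψ i) (Ψ k) : 𝕜)‖ else 1 with he_def
  have he : ∀ k, 0 < e k := by
    intro k
    by_cases h : ‖(inner 𝕜 (Ψ i) (Ψ k) : 𝕜)‖ < μ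
    · simp only [he_def, if_pos h]; linarith
    · simp only [he_def, if_neg h]; norm_num
  set t : ℝ := (T.inf' hTne e) / 2 with ht_def
  have hinf_pos : 0 < T.inf' hTne e := by
    rw [Finset.lt_inf'_iff]
    exact fun k _ => he k
  have ht0 : 0 < t := half_pos hinf_pos
  have htk : ∀ k, k ≠ i → t < e k := by
    intro k hk
    have hkT : k ∈ T := by simp [hT, hk]
    exact lt_of_lt_of_le (half_lt_self hinf_pos) (Finset.inf'_le e hkT)
  set v := Ψ i with hv
  set w := v + (t : 𝕜) • ψ with hw_def
  have hre_t : RCLike.re (inner 𝕜 v ((t:𝕜) • ψ) : 𝕜) = t * RCLike.re (inner 𝕜 v ψ : 𝕜) := by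
    rw [inner_smul_right]
    exact RCLike.re_ofReal_mul t _
  have hw2 : 1 + t^2 ≤ ‖w‖^2 := by
    rw [hw_def, @norm_add_sq 𝕜]
    have h1 : ‖v‖ = 1 := hunit i
    have h2 : ‖(t:𝕜) • ψ‖ = t := by
      rw [norm_smul, hψ, RCLike.norm_ofReal, abs_of_pos ht0, mul_one]
    rw [h1, h2, hre_t]
    nlinarith [mul_nonneg ht0.le hre]
  have hw1 : 1 < ‖w‖ := by nlinarith [norm_nonneg w, ht0, sq_nonneg t]
  have hw0 : w ≠ 0 := by
    intro h; rw [h, norm_zero] at hw1; linarith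
  have hwinv_lt : ‖w‖⁻¹ < 1 := by
    rw [inv_lt_one_iff₀]; right; exact hw1
  have hwinv_pos : 0 < ‖w‖⁻¹ := inv_pos.mpr (by linarith)
  set u : E := ((‖w‖ : 𝕜))⁻¹ • w with hu_def
  have hu_norm : ‖u‖ = 1 := by
    rw [hu_def, norm_smul, norm_inv, RCLike.norm_ofReal, abs_of_pos (by linarith),
      inv_mul_cancel₀ (by positivity)]
  set Ψ' := Function.update Ψ i u with hΨ'
  have hΨ'i : Ψ' i = u := Function.update_self i u Ψ
  have hΨ'k : ∀ k, k ≠ i → Ψ' k = Ψ k := fun k hk => Function.update_of_ne hk u Ψ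
  have key : ∀ k, k ≠ i → ‖(inner 𝕜 (Ψ' i) (Ψ' k) : 𝕜)‖ < μ := by
    intro k hk
    rw [hΨ'i, hΨ'k k hk, hu_def, inner_smul_left, hw_def, inner_add_left, inner_smul_left]
    rw [map_inv₀, RCLike.conj_ofReal, RCLike.conj_ofReal]
    rw [norm_mul, norm_inv, RCLike.norm_ofReal, abs_of_pos (by linarith)]
    by_cases hcase : ‖(inner 𝕜 v (Ψ k) : 𝕜)‖ < μ
    · have hb : ‖(inner 𝕜 v (Ψ k) : 𝕜) + (t:𝕜) * (inner 𝕜 ψ (Ψ k) : 𝕜)‖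
          ≤ ‖(inner 𝕜 v (Ψ k) : 𝕜)‖ + t := by
        refine (norm_add_le _ _).trans ?_
        gcongr
        rw [norm_mul, RCLike.norm_ofReal, abs_of_pos ht0]
        calc t * ‖(inner 𝕜 ψ (Ψ k) : 𝕜)‖ ≤ t * (‖ψ‖ * ‖Ψ k‖) := by
              gcongr; exact norm_inner_le_norm _ _
          _ = t := by rw [hψ, hunit k]; ring
      have het : e k = μ - ‖(inner 𝕜 v (Ψ k) : 𝕜)‖ := by
        simp only [he_def, hv, if_pos hcase]
        exact if_pos hcase
      have h2 : ‖(inner 𝕜 v (Ψ k) : 𝕜)‖ + t < μ := by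
        have := htk k hk; rw [het] at this; linarith
      calc ‖w‖⁻¹ * ‖(inner 𝕜 v (Ψ k) : 𝕜) + (t:𝕜) * (inner 𝕜 ψ (Ψ k) : 𝕜)‖
          ≤ 1 * (‖(inner 𝕜 v (Ψ k) : 𝕜)‖ + t) := by
            apply mul_le_mul hwinv_lt.le hb (norm_nonneg _) zero_le_one
        _ < μ := by rw [one_mul]; exact h2
    · have heq : ‖(inner 𝕜 v (Ψ k) : 𝕜)‖ = μ :=
        le_antisymm (hle i k (Ne.symm hk)) (not_lt.mp hcase)
      rw [horth k hk heq, mul_zero, add_zero, heq]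
      calc ‖w‖⁻¹ * μ < 1 * μ := by
            apply mul_lt_mul_of_pos_right hwinv_lt hμ
        _ = μ := one_mul μ
  refine ⟨Ψ', ?_, hΨ'k, key, ?_⟩
  · intro j
    by_cases hj : j = i
    · rw [hj, hΨ'i, hu_norm]
    · rw [hΨ'k j hj]; exact hunit j
  · intro j k hjk
    by_cases hj : j = i
    · subst hj
      exact (key k (Ne.symm hjk)).le
    · by_cases hk : k = i
      · subst hk
        rw [← norm_inner_symm]
        exact (key j hj).le
      · rw [hΨ'k j hj, hΨ'k k hk]
        exact hle j k hjk

lemma exists_perp_unit {𝕜 : Type*} [RCLike 𝕜] {d : ℕ}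
    (K : Submodule 𝕜 (EuclideanSpace 𝕜 (Fin d))) (hK : K ≠ ⊤)
    (v : EuclideanSpace 𝕜 (Fin d)) :
    ∃ ψ : EuclideanSpace 𝕜 (Fin d), ‖ψ‖ = 1 ∧ 0 ≤ RCLike.re (inner 𝕜 v ψ : 𝕜) ∧
      ∀ u ∈ K, (inner 𝕜 ψ u : 𝕜) = 0 := by
  have hKo : Kᗮ ≠ ⊥ := by
    intro h
    exact hK (Submodule.orthogonal_eq_bot_iff.mp h)
  obtain ⟨ψ₀, hψ₀K, hψ₀⟩ := Submodule.ne_bot_iff _ |>.mp hKo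
  set ψ₁ : EuclideanSpace 𝕜 (Fin d) :=
    if 0 ≤ RCLike.re (inner 𝕜 v ψ₀ : 𝕜) then ψ₀ else -ψ₀ with hψ₁def
  have hψ₁K : ψ₁ ∈ Kᗮ := by
    by_cases h : 0 ≤ RCLike.re (inner 𝕜 v ψ₀ : 𝕜)
    · rw [hψ₁def, if_pos h]; exact hψ₀K
    · simp only [hψ₁def, if_neg h]; exact Kᗮ.neg_mem hψ₀K
  have hψ₁ne : ψ₁ ≠ 0 := by
    by_cases h : 0 ≤ RCLike.re (inner 𝕜 v ψ₀ : 𝕜)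
    · rw [hψ₁def, if_pos h]; exact hψ₀
    · simp only [hψ₁def, if_neg h, neg_ne_zero]; exact hψ₀
  have hψ₁re : 0 ≤ RCLike.re (inner 𝕜 v ψ₁ : 𝕜) := by
    by_cases h : 0 ≤ RCLike.re (inner 𝕜 v ψ₀ : 𝕜)
    · rw [hψ₁def, if_pos h]; exact h
    · simp only [hψ₁def, if_neg h, inner_neg_right, map_neg]
      linarith [not_le.mp h]
  have hn1 : (0:ℝ) < ‖ψ₁‖ := norm_pos_iff.mpr hψ₁ne
  refine ⟨((‖ψ₁‖ : 𝕜))⁻¹ • ψ₁, ?_, ?_, ?_⟩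
  · rw [norm_smul, norm_inv, RCLike.norm_ofReal, abs_of_pos hn1,
      inv_mul_cancel₀ (by positivity)]
  · rw [inner_smul_right]
    rw [← RCLike.ofReal_inv]
    rw [RCLike.re_ofReal_mul]
    positivity
  · intro u hu
    rw [inner_smul_left, inner_eq_zero_symm.mpr ((Submodule.mem_orthogonal _ _).mp hψ₁K u hu),
      mul_zero]

/-- If `Φ` is a Grassmannian frame of `n > d` unit vectors in `𝔽^d`, then there
is an index `j` such that the vectors `φ_k` (`k ≠ j`) making maximal angle with
`φ_j`, i.e. with `|⟨φ_j, φ_k⟩| = μ(Φ)`, span `𝔽^d`. -/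
theorem grassmannian_frame_exists_spanning_neighbors {𝕜 : Type*} [RCLike 𝕜] {d n : ℕ}
    (hd : 0 < d) (hn : d < n)
    (Φ : Fin n → EuclideanSpace 𝕜 (Fin d))
    (hunit : ∀ j, ‖Φ j‖ = 1)
    (hmin : ∀ Ψ : Fin n → EuclideanSpace 𝕜 (Fin d),
      (∀ j, ‖Ψ j‖ = 1) → coherence Φ ≤ coherence Ψ) :
    ∃ j : Fin n, Submodule.span 𝕜
      (Φ '' {k | k ≠ j ∧ ‖(inner 𝕜 (Φ j) (Φ k) : 𝕜)‖ = coherence Φ}) = ⊤ := by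
  by_contra hcon
  push_neg at hcon
  have hμ : 0 < coherence Φ := coherence_pos hn Φ hunit
  have key : ∀ m : ℕ, m ≤ n → ∃ Ψ : Fin n → EuclideanSpace 𝕜 (Fin d),
      (∀ j, ‖Ψ j‖ = 1) ∧ (∀ k : Fin n, m ≤ (k : ℕ) → Ψ k = Φ k) ∧
      (∀ j k : Fin n, j ≠ k → ‖(inner 𝕜 (Ψ j) (Ψ k) : 𝕜)‖ ≤ coherence Φ) ∧
      (∀ j k : Fin n, j ≠ k → ((j:ℕ) < m ∨ (k:ℕ) < m) →
        ‖(inner 𝕜 (Ψ j) (Ψ k) : 𝕜)‖ < coherence Φ) := by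
    intro m
    induction m with
    | zero =>
      intro _
      exact ⟨Φ, hunit, fun k _ => rfl,
        fun j k hjk => norm_inner_le_coherence Φ hjk,
        fun j k _ h => by omega⟩
    | succ m ih =>
      intro hm
      obtain ⟨Ψ, h1, h2, h3, h4⟩ := ih (by omega)
      set i : Fin n := ⟨m, by omega⟩ with hi
      have hΨi : Ψ i = Φ i := h2 i (le_refl m)
      obtain ⟨ψ, hψ1, hψre, hψorth⟩ := exists_perp_unit
        (Submodule.span 𝕜 (Φ '' {k | k ≠ i ∧ ‖(inner 𝕜 (Φ i) (Φ k) : 𝕜)‖ = coherence Φ}))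
        (hcon i) (Φ i)
      have horth : ∀ k, k ≠ i → ‖(inner 𝕜 (Ψ i) (Ψ k) : 𝕜)‖ = coherence Φ →
          (inner 𝕜 ψ (Ψ k) : 𝕜) = 0 := by
        intro k hk hnorm
        have hkm : m ≤ (k : ℕ) := by
          by_contra hklt
          exact absurd hnorm (ne_of_lt (h4 i k (Ne.symm hk) (Or.inr (by omega))))
        have hΨk : Ψ k = Φ k := h2 k hkm
        rw [hΨk]
        apply hψorth
        apply Submodule.subset_span
        exact ⟨k, ⟨hk, by rw [← hΨi, ← hΨk]; exact hnorm⟩, rfl⟩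
      have hre' : 0 ≤ RCLike.re (inner 𝕜 (Ψ i) ψ : 𝕜) := by rw [hΨi]; exact hψre
      obtain ⟨Ψ', g1, g2, g3, g4⟩ := step_lemma hμ Ψ i h1 h3 ψ hψ1 hre' horth
      refine ⟨Ψ', g1, ?_, g4, ?_⟩
      · intro k hk
        have hki : k ≠ i := by
          intro h; rw [h] at hk; simp only [hi] at hk; omega
        rw [g2 k hki]
        exact h2 k (by omega)
      · intro j k hjk hlt
        by_cases hj : j = i
        · subst hj
          exact g3 k (Ne.symm hjk)
        · by_cases hk : k = i
          · subst hk
            rw [← norm_inner_symm]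
            exact g3 j hj
          · rw [g2 j hj, g2 k hk]
            apply h4 j k hjk
            have hji : (j:ℕ) ≠ m := fun h => hj (Fin.ext h)
            have hki : (k:ℕ) ≠ m := fun h => hk (Fin.ext h)
            omega
  obtain ⟨Ψ, h1, _, _, h4⟩ := key n (le_refl n)
  have hlt : coherence Ψ < coherence Φ :=
    coherence_lt_of_forall Ψ hμ
      (fun j k hjk => h4 j k hjk (Or.inl j.isLt))
  exact absurd (hmin Ψ h1) (not_le.mpr hlt)
end

section
/- (Welch–Rankin bound) Let d, n be positive integers with n > d ≥ 2, and let Φ = (φ_1, …, φ_n) be any family of unit vectors in 𝔽^d (𝔽 = ℝ or ℂ). Then μ(Φ) ≥ √((n − d)/(d(n − 1))). -/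
/-- Welch–Rankin bound: any `n > d ≥ 2` unit vectors in `𝔽^d` satisfy
`μ(Φ) ≥ √((n − d)/(d(n − 1)))`. -/
theorem welch_rankin_bound {𝕜 : Type*} [RCLike 𝕜] {d n : ℕ}
    (hd : 2 ≤ d) (hn : d < n)
    (Φ : Fin n → EuclideanSpace 𝕜 (Fin d))
    (hunit : ∀ j, ‖Φ j‖ = 1) :
    Real.sqrt (((n : ℝ) - d) / (d * ((n : ℝ) - 1))) ≤ coherence Φ := by
  classical
  set μ : ℝ := coherence Φ with hμdef
  have hμ0 : 0 ≤ μ := NNReal.coe_nonneg _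
  set g : Fin n → Fin n → 𝕜 := fun k l => (inner 𝕜 (Φ k) (Φ l) : 𝕜) with hg
  have hb : ∀ k l : Fin n, k ≠ l → ‖g k l‖ ≤ μ := by
    intro k l hkl
    have h : (‖g k l‖₊ : NNReal) ≤
        ((Finset.univ.filter fun p : Fin n × Fin n => p.1 ≠ p.2).sup
          fun p => ‖(inner 𝕜 (Φ p.1) (Φ p.2) : 𝕜)‖₊) := by
      exact Finset.le_sup
        (f := fun p : Fin n × Fin n => ‖(inner 𝕜 (Φ p.1) (Φ p.2) : 𝕜)‖₊)
        (Finset.mem_filter.2 ⟨Finset.mem_univ (k, l), hkl⟩)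
    exact_mod_cast h
  set T : Fin d → Fin d → 𝕜 :=
    fun i j => ∑ k, (starRingEnd 𝕜) (Φ k i) * Φ k j with hT
  -- expansion of each term
  have hexp : ∀ k l, g k l * (starRingEnd 𝕜) (g k l) =
      ∑ i, ∑ j, ((starRingEnd 𝕜) (Φ k i) * Φ l i) * (Φ k j * (starRingEnd 𝕜) (Φ l j)) := by
    intro k l
    have hgkl : g k l = ∑ i, (starRingEnd 𝕜) (Φ k i) * Φ l i := by
      simp [hg, PiLp.inner_apply, RCLike.inner_apply, mul_comm]
    rw [hgkl, map_sum, Finset.sum_mul_sum]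
    simp [map_mul]
  -- key rearrangement
  have hC : ∑ k, ∑ l, g k l * (starRingEnd 𝕜) (g k l)
      = ∑ i, ∑ j, T i j * (starRingEnd 𝕜) (T i j) := by
    simp_rw [hexp]
    have hswap : ∑ k, ∑ l, ∑ i, ∑ j,
          ((starRingEnd 𝕜) (Φ k i) * Φ l i) * (Φ k j * (starRingEnd 𝕜) (Φ l j))
        = ∑ i, ∑ j, ∑ k, ∑ l,
          ((starRingEnd 𝕜) (Φ k i) * Φ l i) * (Φ k j * (starRingEnd 𝕜) (Φ l j)) := by
      calc ∑ k, ∑ l, ∑ i, ∑ j, ((starRingEnd 𝕜) (Φ k i) * Φ l i) * (Φ k j * (starRingEnd 𝕜) (Φ l j))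
          = ∑ k, ∑ i, ∑ l, ∑ j, ((starRingEnd 𝕜) (Φ k i) * Φ l i) * (Φ k j * (starRingEnd 𝕜) (Φ l j)) :=
            Finset.sum_congr rfl fun k _ => Finset.sum_comm
        _ = ∑ i, ∑ k, ∑ l, ∑ j, ((starRingEnd 𝕜) (Φ k i) * Φ l i) * (Φ k j * (starRingEnd 𝕜) (Φ l j)) :=
            Finset.sum_comm
        _ = ∑ i, ∑ k, ∑ j, ∑ l, ((starRingEnd 𝕜) (Φ k i) * Φ l i) * (Φ k j * (starRingEnd 𝕜) (Φ l j)) :=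
            Finset.sum_congr rfl fun i _ => Finset.sum_congr rfl fun k _ => Finset.sum_comm
        _ = ∑ i, ∑ j, ∑ k, ∑ l, ((starRingEnd 𝕜) (Φ k i) * Φ l i) * (Φ k j * (starRingEnd 𝕜) (Φ l j)) :=
            Finset.sum_congr rfl fun i _ => Finset.sum_comm
    rw [hswap]
    refine Finset.sum_congr rfl fun i _ => Finset.sum_congr rfl fun j _ => ?_
    calc ∑ k, ∑ l, ((starRingEnd 𝕜) (Φ k i) * Φ l i) * (Φ k j * (starRingEnd 𝕜) (Φ l j))
        = ∑ k, ∑ l, ((starRingEnd 𝕜) (Φ k i) * Φ k j) * (Φ l i * (starRingEnd 𝕜) (Φ l j)) := by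
          exact Finset.sum_congr rfl fun k _ => Finset.sum_congr rfl fun l _ => by ring
      _ = (∑ k, (starRingEnd 𝕜) (Φ k i) * Φ k j) * (∑ l, Φ l i * (starRingEnd 𝕜) (Φ l j)) :=
          (Finset.sum_mul_sum _ _ _ _).symm
      _ = T i j * (starRingEnd 𝕜) (T i j) := by
          rw [hT]; rw [map_sum]; simp [map_mul]
  have hre : ∀ z : 𝕜, RCLike.re (z * (starRingEnd 𝕜) z) = ‖z‖ ^ 2 := by
    intro z
    rw [RCLike.mul_conj, ← RCLike.ofReal_pow, RCLike.ofReal_re]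
  -- norms version
  have hnorm : ∑ k, ∑ l, ‖g k l‖ ^ 2 = ∑ i, ∑ j, ‖T i j‖ ^ 2 := by
    have := congrArg (RCLike.re (K := 𝕜)) hC
    simpa [map_sum, hre] using this
  -- diagonal of T
  have hTdiag : ∑ i, RCLike.re (T i i) = (n : ℝ) := by
    have : ∀ i, RCLike.re (T i i) = ∑ k, RCLike.re ((starRingEnd 𝕜) (Φ k i) * Φ k i) := by
      intro i; rw [hT]; exact map_sum _ _ _
    rw [Finset.sum_congr rfl fun i _ => this i, Finset.sum_comm]
    have hk : ∀ k : Fin n, ∑ i, RCLike.re ((starRingEnd 𝕜) (Φ k i) * Φ k i) = 1 := by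
      intro k
      have h1 : RCLike.re (g k k) = ‖Φ k‖ ^ 2 := by
        rw [hg]; exact inner_self_eq_norm_sq (𝕜 := 𝕜) (Φ k)
      have h2 : g k k = ∑ i, (starRingEnd 𝕜) (Φ k i) * Φ k i := by
        simp [hg, PiLp.inner_apply, RCLike.inner_apply, mul_comm]
      rw [← map_sum, ← h2, h1, hunit k, one_pow]
    rw [Finset.sum_congr rfl fun k _ => hk k, Finset.sum_const, Finset.card_univ,
      Fintype.card_fin, nsmul_eq_mul, mul_one]
  have hd0 : (0:ℝ) < d := by exact_mod_cast Nat.lt_of_lt_of_le Nat.zero_lt_two hd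
  have hn0 : (0:ℝ) < n := by exact_mod_cast Nat.zero_lt_of_lt hn
  have hdn : (d:ℝ) + 1 ≤ n := by exact_mod_cast hn
  -- n ≤ ∑ ‖T i i‖
  have hTn : (n:ℝ) ≤ ∑ i, ‖T i i‖ := by
    rw [← hTdiag]
    exact Finset.sum_le_sum fun i _ => RCLike.re_le_norm (T i i)
  have hCS : (∑ i, ‖T i i‖) ^ 2 ≤ (d:ℝ) * ∑ i, ‖T i i‖ ^ 2 := by
    have := sq_sum_le_card_mul_sum_sq (s := (Finset.univ : Finset (Fin d)))
      (f := fun i => ‖T i i‖)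
    simpa using this
  have hdiagle : ∑ i, ‖T i i‖ ^ 2 ≤ ∑ i, ∑ j, ‖T i j‖ ^ 2 := by
    refine Finset.sum_le_sum fun i _ => ?_
    exact Finset.single_le_sum (f := fun j => ‖T i j‖ ^ 2)
      (fun j _ => by positivity) (Finset.mem_univ i)
  have key : (n:ℝ) ^ 2 ≤ (d:ℝ) * ∑ k, ∑ l, ‖g k l‖ ^ 2 := by
    calc (n:ℝ) ^ 2 ≤ (∑ i, ‖T i i‖) ^ 2 := by
          exact pow_le_pow_left₀ (le_of_lt hn0) hTn 2
      _ ≤ (d:ℝ) * ∑ i, ‖T i i‖ ^ 2 := hCS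
      _ ≤ (d:ℝ) * ∑ i, ∑ j, ‖T i j‖ ^ 2 := by
          exact mul_le_mul_of_nonneg_left hdiagle (le_of_lt hd0)
      _ = (d:ℝ) * ∑ k, ∑ l, ‖g k l‖ ^ 2 := by rw [hnorm]
  have upper : ∑ k, ∑ l, ‖g k l‖ ^ 2 ≤ (n:ℝ) * (1 + ((n:ℝ) - 1) * μ ^ 2) := by
    have hk : ∀ k : Fin n, ∑ l, ‖g k l‖ ^ 2 ≤ 1 + ((n:ℝ) - 1) * μ ^ 2 := by
      intro k
      have hdiag : ‖g k k‖ ^ 2 = 1 := by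
        have : g k k = ((1:ℝ) : 𝕜) := by
          show (inner 𝕜 (Φ k) (Φ k) : 𝕜) = ((1:ℝ) : 𝕜)
          rw [inner_self_eq_norm_sq_to_K, hunit k]; norm_num
        rw [this]; simp
      have hsplit : ∑ l, ‖g k l‖ ^ 2
          = ‖g k k‖ ^ 2 + ∑ l ∈ Finset.univ.erase k, ‖g k l‖ ^ 2 :=
        (Finset.add_sum_erase _ _ (Finset.mem_univ k)).symm
      have hrest : ∑ l ∈ Finset.univ.erase k, ‖g k l‖ ^ 2 ≤ ((n:ℝ) - 1) * μ ^ 2 := by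
        calc ∑ l ∈ Finset.univ.erase k, ‖g k l‖ ^ 2
            ≤ ∑ _l ∈ Finset.univ.erase k, μ ^ 2 := by
              refine Finset.sum_le_sum fun l hl => ?_
              have hne : k ≠ l := fun h => (Finset.mem_erase.1 hl).1 h.symm
              exact pow_le_pow_left₀ (norm_nonneg _) (hb k l hne) 2
          _ = ((n:ℝ) - 1) * μ ^ 2 := by
              rw [Finset.sum_const, Finset.card_erase_of_mem (Finset.mem_univ k),
                Finset.card_univ, Fintype.card_fin, nsmul_eq_mul]
              have : ((n - 1 : ℕ) : ℝ) = (n:ℝ) - 1 := by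
                have : 1 ≤ n := Nat.one_le_of_lt hn
                push_cast [this]; ring
              rw [this]
      rw [hsplit, hdiag]
      linarith
    calc ∑ k, ∑ l, ‖g k l‖ ^ 2 ≤ ∑ _k : Fin n, (1 + ((n:ℝ) - 1) * μ ^ 2) :=
          Finset.sum_le_sum fun k _ => hk k
      _ = (n:ℝ) * (1 + ((n:ℝ) - 1) * μ ^ 2) := by
          rw [Finset.sum_const, Finset.card_univ, Fintype.card_fin, nsmul_eq_mul]
  -- combine
  have hmain : ((n:ℝ) - d) / ((d:ℝ) * ((n:ℝ) - 1)) ≤ μ ^ 2 := by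
    have h1 : (n:ℝ) ^ 2 ≤ (d:ℝ) * ((n:ℝ) * (1 + ((n:ℝ) - 1) * μ ^ 2)) :=
      le_trans key (mul_le_mul_of_nonneg_left upper (le_of_lt hd0))
    rw [div_le_iff₀ (by nlinarith)]
    nlinarith [hn0, hd0, hdn, hμ0]
  calc Real.sqrt (((n : ℝ) - d) / (d * ((n : ℝ) - 1)))
      ≤ Real.sqrt (μ ^ 2) := Real.sqrt_le_sqrt hmain
    _ = μ := Real.sqrt_sq hμ0
end

section
/- Let d, n be positive integers with n > d ≥ 2, and let Φ = (φ_1, …, φ_n) be a family of unit vectors in 𝔽^d (𝔽 = ℝ or ℂ). Then μ(Φ) = √((n − d)/(d(n − 1))) if and only if Φ is an equiangular tight frame, i.e., |⟨φ_j, φ_k⟩| is the same for all j ≠ k and Σ_j ⟨x, φ_j⟩ φ_j = (n/d) x for all x ∈ 𝔽^d. -/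
open Finset

section Helpers

variable {𝕜 : Type*} [RCLike 𝕜] {d n : ℕ}

/-- The frame operator matrix. -/
noncomputable def Smat (Φ : Fin n → EuclideanSpace 𝕜 (Fin d)) (a b : Fin d) : 𝕜 :=
  ∑ j, Φ j a * (starRingEnd 𝕜) (Φ j b)

lemma conj_mul_Smat (Φ : Fin n → EuclideanSpace 𝕜 (Fin d)) (a b : Fin d) :
    (starRingEnd 𝕜) (Smat Φ a b) * Smat Φ a b
      = ∑ k, ∑ j, ((starRingEnd 𝕜) (Φ k a) * Φ j a) * (Φ k b * (starRingEnd 𝕜) (Φ j b)) := by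
  unfold Smat
  rw [map_sum, Finset.sum_mul_sum]
  simp only [map_mul, starRingEnd_apply, star_star]
  refine Finset.sum_congr rfl fun k _ => Finset.sum_congr rfl fun j _ => by ring

lemma sum4_comm {M : Type*} [AddCommMonoid M] (F : Fin d → Fin d → Fin n → Fin n → M) :
    ∑ a, ∑ b, ∑ k, ∑ j, F a b k j = ∑ k, ∑ j, ∑ a, ∑ b, F a b k j := by
  calc ∑ a, ∑ b, ∑ k, ∑ j, F a b k j
      = ∑ a, ∑ k, ∑ b, ∑ j, F a b k j :=
        Finset.sum_congr rfl fun a _ => Finset.sum_comm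
    _ = ∑ k, ∑ a, ∑ b, ∑ j, F a b k j := Finset.sum_comm
    _ = ∑ k, ∑ a, ∑ j, ∑ b, F a b k j :=
        Finset.sum_congr rfl fun k _ => Finset.sum_congr rfl fun a _ => Finset.sum_comm
    _ = ∑ k, ∑ j, ∑ a, ∑ b, F a b k j :=
        Finset.sum_congr rfl fun k _ => Finset.sum_comm

lemma sum_sq_Smat (Φ : Fin n → EuclideanSpace 𝕜 (Fin d)) :
    ∑ a, ∑ b, ‖Smat Φ a b‖ ^ 2 = ∑ j, ∑ k, ‖(inner 𝕜 (Φ j) (Φ k) : 𝕜)‖ ^ 2 := by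
  have hconj : ∀ k j : Fin n, (∑ b, Φ k b * (starRingEnd 𝕜) (Φ j b))
      = (starRingEnd 𝕜) (inner 𝕜 (Φ k) (Φ j) : 𝕜) := by
    intro k j
    rw [PiLp.inner_apply, map_sum]
    exact Finset.sum_congr rfl fun b _ => by
      simp only [RCLike.inner_apply, map_mul, starRingEnd_apply, star_star]; ring
  have key : ∑ a, ∑ b, (starRingEnd 𝕜) (Smat Φ a b) * Smat Φ a b
      = ∑ k, ∑ j, (inner 𝕜 (Φ k) (Φ j) : 𝕜) * (starRingEnd 𝕜) (inner 𝕜 (Φ k) (Φ j) : 𝕜) := by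
    simp only [conj_mul_Smat]
    rw [sum4_comm]
    refine Finset.sum_congr rfl fun k _ => Finset.sum_congr rfl fun j _ => ?_
    rw [← Finset.sum_mul_sum, hconj, PiLp.inner_apply]
    simp only [RCLike.inner_apply]
    congr 1; exact Finset.sum_congr rfl fun i _ => mul_comm _ _
  have lhs : ∀ a b : Fin d, ‖Smat Φ a b‖ ^ 2
      = RCLike.re ((starRingEnd 𝕜) (Smat Φ a b) * Smat Φ a b) := by
    intro a b; rw [RCLike.conj_mul, ← RCLike.ofReal_pow, RCLike.ofReal_re]
  have rhs : ∀ j k : Fin n, ‖(inner 𝕜 (Φ k) (Φ j) : 𝕜)‖ ^ 2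
      = RCLike.re ((inner 𝕜 (Φ k) (Φ j) : 𝕜) * (starRingEnd 𝕜) (inner 𝕜 (Φ k) (Φ j) : 𝕜)) := by
    intro j k; rw [RCLike.mul_conj, ← RCLike.ofReal_pow, RCLike.ofReal_re]
  calc ∑ a, ∑ b, ‖Smat Φ a b‖ ^ 2
      = RCLike.re (∑ a, ∑ b, (starRingEnd 𝕜) (Smat Φ a b) * Smat Φ a b) := by
        simp only [map_sum, lhs]
    _ = RCLike.re (∑ k, ∑ j, (inner 𝕜 (Φ k) (Φ j) : 𝕜) * (starRingEnd 𝕜) (inner 𝕜 (Φ k) (Φ j) : 𝕜)) := by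
        rw [key]
    _ = ∑ k, ∑ j, ‖(inner 𝕜 (Φ k) (Φ j) : 𝕜)‖ ^ 2 := by
        simp only [map_sum, ← rhs]

lemma sum_eucl_apply {ι : Type*} (s : Finset ι)
    (f : ι → EuclideanSpace 𝕜 (Fin d)) (a : Fin d) :
    (∑ j ∈ s, f j) a = ∑ j ∈ s, f j a := by
  induction s using Finset.cons_induction with
  | empty => rfl
  | cons j s hj ih => rw [Finset.sum_cons, Finset.sum_cons, ← ih]; rfl

lemma frame_iff_mat (Φ : Fin n → EuclideanSpace 𝕜 (Fin d)) :
    (∀ x : EuclideanSpace 𝕜 (Fin d),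
        ∑ j, (inner 𝕜 (Φ j) x : 𝕜) • Φ j = ((n : 𝕜) / (d : 𝕜)) • x) ↔
      (∀ a b, Smat Φ a b = if a = b then (n : 𝕜) / (d : 𝕜) else 0) := by
  constructor
  · intro h a b
    have h1 := congrArg (fun v : EuclideanSpace 𝕜 (Fin d) => v a) (h (EuclideanSpace.single b 1))
    beta_reduce at h1
    rw [sum_eucl_apply] at h1
    have h2 : ∀ j, ((inner 𝕜 (Φ j) (EuclideanSpace.single b 1) : 𝕜) • Φ j) a
        = Φ j a * (starRingEnd 𝕜) (Φ j b) := by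
      intro j
      show (inner 𝕜 (Φ j) (EuclideanSpace.single b 1) : 𝕜) * Φ j a = _
      rw [EuclideanSpace.inner_single_right]
      ring
    rw [Finset.sum_congr rfl fun j _ => h2 j] at h1
    have h3 : (((n : 𝕜) / (d : 𝕜)) • EuclideanSpace.single b 1) a
        = if a = b then (n : 𝕜) / (d : 𝕜) else 0 := by
      show ((n : 𝕜) / (d : 𝕜)) * (EuclideanSpace.single b 1 : EuclideanSpace 𝕜 (Fin d)) a = _
      rw [EuclideanSpace.single_apply]
      split <;> simp
    rw [h3] at h1
    exact h1
  · intro h x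
    ext a
    rw [sum_eucl_apply]
    have h2 : ∀ j, ((inner 𝕜 (Φ j) x : 𝕜) • Φ j) a
        = ∑ b, (Φ j a * (starRingEnd 𝕜) (Φ j b)) * x b := by
      intro j
      show (inner 𝕜 (Φ j) x : 𝕜) * Φ j a = _
      rw [PiLp.inner_apply]
      simp only [RCLike.inner_apply, smul_eq_mul, Finset.sum_mul, Finset.mul_sum]
      exact Finset.sum_congr rfl fun b _ => by ring
    rw [Finset.sum_congr rfl fun j _ => h2 j, Finset.sum_comm]
    have h3 : ∀ b, ∑ j, (Φ j a * (starRingEnd 𝕜) (Φ j b)) * x b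
        = (if a = b then (n : 𝕜) / (d : 𝕜) else 0) * x b := by
      intro b
      rw [← Finset.sum_mul, ← Smat, h a b]
    rw [Finset.sum_congr rfl fun b _ => h3 b]
    simp

lemma norm_sq_sum_eucl (x : EuclideanSpace 𝕜 (Fin d)) :
    ∑ i, ‖x i‖ ^ 2 = ‖x‖ ^ 2 := by
  rw [EuclideanSpace.norm_eq, Real.sq_sqrt]
  positivity

lemma Smat_diag (Φ : Fin n → EuclideanSpace 𝕜 (Fin d)) (a : Fin d) :
    Smat Φ a a = ((∑ j, ‖Φ j a‖ ^ 2 : ℝ) : 𝕜) := by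
  unfold Smat
  push_cast
  exact Finset.sum_congr rfl fun j _ => by
    rw [RCLike.mul_conj]

end Helpers

/-- Equality in the Welch–Rankin bound holds if and only if `Φ` is an
equiangular tight frame. -/
theorem welch_rankin_equality_iff_etf {𝕜 : Type*} [RCLike 𝕜] {d n : ℕ}
    (hd : 2 ≤ d) (hn : d < n)
    (Φ : Fin n → EuclideanSpace 𝕜 (Fin d))
    (hunit : ∀ j, ‖Φ j‖ = 1) :
    coherence Φ = Real.sqrt (((n : ℝ) - d) / (d * ((n : ℝ) - 1))) ↔
      ((∃ c : ℝ, ∀ j k, j ≠ k → ‖(inner 𝕜 (Φ j) (Φ k) : 𝕜)‖ = c) ∧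
        ∀ x : EuclideanSpace 𝕜 (Fin d),
          ∑ j, (inner 𝕜 (Φ j) x : 𝕜) • Φ j = ((n : 𝕜) / (d : 𝕜)) • x) := by
  classical
  have hd0 : (0:ℝ) < (d:ℝ) := by
    have : 0 < d := by omega
    exact_mod_cast this
  have hdR : ((d:ℝ)) ≠ 0 := ne_of_gt hd0
  have hn1 : (1:ℝ) < (n:ℝ) := by
    have : 1 < n := by omega
    exact_mod_cast this
  have hdltn : (d:ℝ) < (n:ℝ) := by exact_mod_cast hn
  set W : ℝ := ((n : ℝ) - d) / (d * ((n : ℝ) - 1)) with hWdef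
  have hW0 : 0 ≤ W := by
    apply div_nonneg <;> nlinarith
  -- coherence basics
  set T := (Finset.univ.filter fun p : Fin n × Fin n => p.1 ≠ p.2) with hT
  have hne01 : (⟨0, by omega⟩ : Fin n) ≠ (⟨1, by omega⟩ : Fin n) := by
    simp [Fin.ext_iff]
  have hTne : T.Nonempty := ⟨(⟨0, by omega⟩, ⟨1, by omega⟩), by
    simp only [hT, Finset.mem_filter, Finset.mem_univ, true_and]
    exact hne01⟩
  obtain ⟨p₀, hp₀T, hp₀⟩ := Finset.exists_mem_eq_sup T hTne
    (fun p : Fin n × Fin n => ‖(inner 𝕜 (Φ p.1) (Φ p.2) : 𝕜)‖₊)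
  have hp₀ne : p₀.1 ≠ p₀.2 := (Finset.mem_filter.mp hp₀T).2
  have hcohdef : coherence Φ = ((T.sup fun p : Fin n × Fin n =>
      ‖(inner 𝕜 (Φ p.1) (Φ p.2) : 𝕜)‖₊ : NNReal) : ℝ) := rfl
  have hcoh : coherence Φ = ‖(inner 𝕜 (Φ p₀.1) (Φ p₀.2) : 𝕜)‖ := by
    rw [hcohdef, hp₀, coe_nnnorm]
  set μ := coherence Φ with hμdef
  have hμ0 : 0 ≤ μ := by rw [hcoh]; exact norm_nonneg _
  have hμmax : ∀ j k : Fin n, j ≠ k → ‖(inner 𝕜 (Φ j) (Φ k) : 𝕜)‖ ≤ μ := by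
    intro j k hjk
    have hmem : (j, k) ∈ T := by
      simp only [hT, Finset.mem_filter, Finset.mem_univ, true_and]; exact hjk
    have h1 := Finset.le_sup (f := fun p : Fin n × Fin n =>
      ‖(inner 𝕜 (Φ p.1) (Φ p.2) : 𝕜)‖₊) hmem
    rw [hcohdef, ← coe_nnnorm]
    exact_mod_cast h1
  -- diagonal of the Gram matrix
  have hGdiag : ∀ j, (inner 𝕜 (Φ j) (Φ j) : 𝕜) = 1 := by
    intro j
    rw [inner_self_eq_norm_sq_to_K, hunit]
    norm_num
  -- splitting double sums
  have hsplit : ∀ f : Fin n → Fin n → ℝ,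
      ∑ j, ∑ k, f j k = (∑ j, ∑ k, if j = k then 0 else f j k) + ∑ j, f j j := by
    intro f
    rw [← Finset.sum_add_distrib]
    refine Finset.sum_congr rfl fun j _ => ?_
    have h1 : ∀ k, f j k = (if j = k then 0 else f j k) + (if j = k then f j k else 0) :=
      fun k => by split <;> ring
    calc ∑ k, f j k
        = ∑ k, ((if j = k then 0 else f j k) + (if j = k then f j k else 0)) :=
          Finset.sum_congr rfl fun k _ => h1 k
      _ = (∑ k, if j = k then 0 else f j k) + ∑ k, (if j = k then f j k else 0) :=
          Finset.sum_add_distrib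
      _ = (∑ k, if j = k then 0 else f j k) + f j j := by
          rw [Finset.sum_ite_eq]; simp
  have hconst : ∀ (j : Fin n) (C : ℝ), ∑ k, (if j = k then 0 else C) = C * ((n:ℝ) - 1) := by
    intro j C
    have h1 : ∀ k : Fin n, (if j = k then (0:ℝ) else C) = C - (if j = k then C else 0) :=
      fun k => by split <;> ring
    rw [Finset.sum_congr rfl fun k _ => h1 k, Finset.sum_sub_distrib, Finset.sum_const,
      Finset.sum_ite_eq]
    simp only [Finset.card_univ, Fintype.card_fin, Finset.mem_univ, if_pos, nsmul_eq_mul]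
    ring
  set E : ℝ := ∑ j, ∑ k, if j = k then 0 else ‖(inner 𝕜 (Φ j) (Φ k) : 𝕜)‖^2 with hE
  have hGsum : ∑ j, ∑ k, ‖(inner 𝕜 (Φ j) (Φ k) : 𝕜)‖^2 = E + n := by
    rw [hsplit (fun j k => ‖(inner 𝕜 (Φ j) (Φ k) : 𝕜)‖^2), hE]
    congr 1
    simp [hGdiag, hunit]
  -- trace
  have htr : ∑ a : Fin d, ∑ j, ‖Φ j a‖^2 = (n:ℝ) := by
    rw [Finset.sum_comm]
    have h1 : ∀ j, ∑ a : Fin d, ‖Φ j a‖^2 = 1 := fun j => by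
      rw [norm_sq_sum_eucl, hunit]; norm_num
    simp [h1]
  -- defect
  have hcKc : ((n:𝕜)/(d:𝕜)) = (((n:ℝ)/(d:ℝ) : ℝ) : 𝕜) := by push_cast; rfl
  set Dq : ℝ := ∑ a : Fin d, ∑ b : Fin d,
    ‖Smat Φ a b - (if a = b then (n:𝕜)/(d:𝕜) else 0)‖^2 with hDq
  have hper : ∀ a b : Fin d, ‖Smat Φ a b - (if a = b then (n:𝕜)/(d:𝕜) else 0)‖^2
      = ‖Smat Φ a b‖^2 + (if a = b
          then (((∑ j, ‖Φ j a‖^2) - (n:ℝ)/d)^2 - (∑ j, ‖Φ j a‖^2)^2) else 0) := by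
    intro a b
    by_cases hab : a = b
    · subst hab
      rw [if_pos rfl, if_pos rfl, Smat_diag, hcKc, ← RCLike.ofReal_sub, RCLike.norm_ofReal,
        RCLike.norm_ofReal, sq_abs, sq_abs]
      ring
    · simp [hab]
  have hDqval : Dq = (E + n) - (n:ℝ)^2/d := by
    have h1 : Dq = (∑ a : Fin d, ∑ b : Fin d, ‖Smat Φ a b‖^2)
        + ∑ a : Fin d, (((∑ j, ‖Φ j a‖^2) - (n:ℝ)/d)^2 - (∑ j, ‖Φ j a‖^2)^2) := by
      rw [hDq]
      rw [Finset.sum_congr rfl fun a _ => Finset.sum_congr rfl fun b _ => hper a b]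
      rw [Finset.sum_congr rfl fun a _ => Finset.sum_add_distrib]
      rw [Finset.sum_add_distrib]
      congr 1
      refine Finset.sum_congr rfl fun a _ => ?_
      rw [Finset.sum_ite_eq]
      simp
    have h2 : ∑ a : Fin d, (((∑ j, ‖Φ j a‖^2) - (n:ℝ)/d)^2 - (∑ j, ‖Φ j a‖^2)^2)
        = -((n:ℝ)^2/d) := by
      have h3 : ∀ a : Fin d, (((∑ j, ‖Φ j a‖^2) - (n:ℝ)/d)^2 - (∑ j, ‖Φ j a‖^2)^2)
          = ((n:ℝ)/d)^2 - 2*((n:ℝ)/d)*(∑ j, ‖Φ j a‖^2) := fun a => by ring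
      rw [Finset.sum_congr rfl fun a _ => h3 a, Finset.sum_sub_distrib, Finset.sum_const,
        ← Finset.mul_sum, htr]
      simp only [Finset.card_univ, Fintype.card_fin, nsmul_eq_mul]
      field_simp
      ring
    rw [h1, h2, sum_sq_Smat, hGsum]
    ring
  have hDq0 : 0 ≤ Dq := by
    rw [hDq]
    refine Finset.sum_nonneg fun a _ => Finset.sum_nonneg fun b _ => by positivity
  have hn1' : ((n:ℝ) - 1) ≠ 0 := by linarith
  have hBval : (n:ℝ)*((n:ℝ)-1)*W = (n:ℝ)^2/d - n := by
    rw [hWdef]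
    field_simp [hdR, hn1']
  constructor
  · -- forward direction
    intro hμW
    have hμsq : μ^2 = W := by rw [hμW, Real.sq_sqrt hW0]
    have hEle : E ≤ (n:ℝ)*((n:ℝ)-1)*W := by
      have h1 : E ≤ ∑ j : Fin n, ∑ k : Fin n, (if j = k then 0 else μ^2) := by
        rw [hE]
        refine Finset.sum_le_sum fun j _ => Finset.sum_le_sum fun k _ => ?_
        split
        · exact le_refl _
        · next h => exact pow_le_pow_left₀ (norm_nonneg _) (hμmax j k h) 2
      have h2 : ∑ j : Fin n, ∑ k : Fin n, (if j = k then 0 else μ^2)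
          = (n:ℝ)*((n:ℝ)-1)*μ^2 := by
        rw [Finset.sum_congr rfl fun j _ => hconst j (μ^2), Finset.sum_const]
        simp only [Finset.card_univ, Fintype.card_fin, nsmul_eq_mul]
        ring
      rw [h2, hμsq] at h1
      exact h1
    have hDqzero : Dq = 0 := by
      refine le_antisymm ?_ hDq0
      rw [hDqval]
      linarith [hBval, hEle]
    have hEeq : E = (n:ℝ)^2/d - n := by
      have := hDqval
      rw [hDqzero] at this
      linarith
    have hmat : ∀ a b : Fin d, Smat Φ a b = if a = b then (n:𝕜)/(d:𝕜) else 0 := by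
      intro a b
      have h0 : ∑ a : Fin d, ∑ b : Fin d,
          ‖Smat Φ a b - (if a = b then (n:𝕜)/(d:𝕜) else 0)‖^2 = 0 := by
        rw [← hDq]; exact hDqzero
      have h1 := (Finset.sum_eq_zero_iff_of_nonneg (fun a _ =>
        Finset.sum_nonneg fun b _ => by positivity)).mp h0 a (Finset.mem_univ a)
      have h2 := (Finset.sum_eq_zero_iff_of_nonneg (fun b _ => by positivity)).mp h1 b
        (Finset.mem_univ b)
      rw [pow_eq_zero_iff (two_ne_zero), norm_eq_zero, sub_eq_zero] at h2
      exact h2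
    have htight := (frame_iff_mat Φ).mpr hmat
    refine ⟨⟨μ, ?_⟩, htight⟩
    intro j k hjk
    have hzero : ∑ j : Fin n, ∑ k : Fin n,
        (if j = k then (0:ℝ) else μ^2 - ‖(inner 𝕜 (Φ j) (Φ k) : 𝕜)‖^2) = 0 := by
      have hexp : ∀ j k : Fin n, (if j = k then (0:ℝ) else μ^2 - ‖(inner 𝕜 (Φ j) (Φ k) : 𝕜)‖^2)
          = (if j = k then 0 else μ^2) - (if j = k then 0 else ‖(inner 𝕜 (Φ j) (Φ k) : 𝕜)‖^2) :=
        fun j k => by split <;> ring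
      rw [Finset.sum_congr rfl fun j _ => Finset.sum_congr rfl fun k _ => hexp j k]
      simp only [Finset.sum_sub_distrib]
      rw [Finset.sum_congr rfl fun j _ => hconst j (μ^2), Finset.sum_const, ← hE]
      simp only [Finset.card_univ, Fintype.card_fin, nsmul_eq_mul]
      rw [hEeq, hμsq]
      linear_combination hBval
    have hnonneg : ∀ j k : Fin n,
        0 ≤ (if j = k then (0:ℝ) else μ^2 - ‖(inner 𝕜 (Φ j) (Φ k) : 𝕜)‖^2) := by
      intro j k
      split
      · exact le_refl 0
      · next h =>
        have h2 : ‖(inner 𝕜 (Φ j) (Φ k) : 𝕜)‖^2 ≤ μ^2 :=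
          pow_le_pow_left₀ (norm_nonneg _) (hμmax j k h) 2
        linarith
    have h1 := (Finset.sum_eq_zero_iff_of_nonneg (fun j _ =>
      Finset.sum_nonneg fun k _ => hnonneg j k)).mp hzero j (Finset.mem_univ j)
    have h2 := (Finset.sum_eq_zero_iff_of_nonneg (fun k _ => hnonneg j k)).mp h1 k
      (Finset.mem_univ k)
    rw [if_neg hjk] at h2
    have h3 : ‖(inner 𝕜 (Φ j) (Φ k) : 𝕜)‖^2 = μ^2 := by linarith
    calc ‖(inner 𝕜 (Φ j) (Φ k) : 𝕜)‖
        = Real.sqrt (‖(inner 𝕜 (Φ j) (Φ k) : 𝕜)‖^2) := (Real.sqrt_sq (norm_nonneg _)).symm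
      _ = Real.sqrt (μ^2) := by rw [h3]
      _ = μ := Real.sqrt_sq hμ0
  · -- backward direction
    rintro ⟨⟨c, hc⟩, htight⟩
    have hmat := (frame_iff_mat Φ).mp htight
    have hSsq : ∑ a : Fin d, ∑ b : Fin d, ‖Smat Φ a b‖^2 = (n:ℝ)^2/d := by
      have h1 : ∀ a b : Fin d, ‖Smat Φ a b‖^2
          = if a = b then ((n:ℝ)/d)^2 else 0 := by
        intro a b
        rw [hmat a b]
        split
        · rw [hcKc, RCLike.norm_ofReal, sq_abs]
        · simp
      have h2 : ∀ a : Fin d, (∑ b : Fin d, if a = b then ((n:ℝ)/d)^2 else 0)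
          = ((n:ℝ)/d)^2 := by
        intro a; rw [Finset.sum_ite_eq]; simp
      rw [Finset.sum_congr rfl fun a _ => Finset.sum_congr rfl fun b _ => h1 a b,
        Finset.sum_congr rfl fun a _ => h2 a, Finset.sum_const]
      simp only [Finset.card_univ, Fintype.card_fin, nsmul_eq_mul]
      field_simp
    have hEeq : E = (n:ℝ)^2/d - n := by
      have := sum_sq_Smat Φ
      rw [hSsq, hGsum] at this
      linarith
    have hc0 : 0 ≤ c := by
      rw [← hc _ _ hne01]
      exact norm_nonneg _
    have hEc : E = (n:ℝ)*((n:ℝ)-1)*c^2 := by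
      have h1 : ∀ j k : Fin n, (if j = k then (0:ℝ) else ‖(inner 𝕜 (Φ j) (Φ k) : 𝕜)‖^2)
          = (if j = k then 0 else c^2) := by
        intro j k
        split
        · rfl
        · next h => rw [hc j k h]
      rw [hE, Finset.sum_congr rfl fun j _ => Finset.sum_congr rfl fun k _ => h1 j k]
      rw [Finset.sum_congr rfl fun j _ => hconst j (c^2), Finset.sum_const]
      simp only [Finset.card_univ, Fintype.card_fin, nsmul_eq_mul]
      ring
    have hcsq : c^2 = W := by
      have hpos : (0:ℝ) < (n:ℝ)*((n:ℝ)-1) := by nlinarith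
      have h1 : (n:ℝ)*((n:ℝ)-1)*c^2 = (n:ℝ)*((n:ℝ)-1)*W := by
        rw [← hEc, hEeq, hBval]
      exact mul_left_cancel₀ (ne_of_gt hpos) h1
    have hμc : μ = c := hcoh.trans (hc _ _ hp₀ne)
    rw [hμc, ← hcsq, Real.sqrt_sq hc0]
end

section
/- (Orthoplex bound, complex case) Let d, n be positive integers with d ≥ 2 and n > d², and let Φ = (φ_1, …, φ_n) be any family of unit vectors in ℂ^d. Then μ(Φ) ≥ 1/√d. -/
/-- Orthoplex bound, complex case: any `n > d²` unit vectors in `ℂ^d` (`d ≥ 2`)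
satisfy `μ(Φ) ≥ 1/√d`. -/
theorem orthoplex_bound_complex {d n : ℕ} (hd : 2 ≤ d) (hn : d ^ 2 < n)
    (Φ : Fin n → EuclideanSpace ℂ (Fin d))
    (hunit : ∀ j, ‖Φ j‖ = 1) :
    1 / Real.sqrt d ≤ coherence Φ := by
  by_contra hcon
  push_neg at hcon
  have hd0 : (0:ℝ) < d := by
    have : (2:ℝ) ≤ d := by exact_mod_cast hd
    linarith
  have hdC : (d:ℂ) ≠ 0 := by exact_mod_cast hd0.ne'
  -- from the coherence assumption
  have hcoh : ∀ j k : Fin n, j ≠ k → ‖(inner ℂ (Φ j) (Φ k) : ℂ)‖ < 1 / Real.sqrt d := by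
    intro j k hjk
    refine lt_of_le_of_lt ?_ hcon
    unfold coherence
    have h : ‖(inner ℂ (Φ j) (Φ k) : ℂ)‖₊ ≤
        (Finset.univ.filter fun p : Fin n × Fin n => p.1 ≠ p.2).sup
          (fun p => ‖(inner ℂ (Φ p.1) (Φ p.2) : ℂ)‖₊) :=
      Finset.le_sup (f := fun p : Fin n × Fin n => ‖(inner ℂ (Φ p.1) (Φ p.2) : ℂ)‖₊)
        (b := (j, k)) (Finset.mem_filter.mpr ⟨Finset.mem_univ _, hjk⟩)
    exact_mod_cast h
  -- the matrix M
  set M : Fin n → Fin n → ℝ :=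
    fun j k => ‖(inner ℂ (Φ j) (Φ k) : ℂ)‖^2 - (d:ℝ)⁻¹ with hM
  have hMneg : ∀ j k : Fin n, j ≠ k → M j k < 0 := by
    intro j k hjk
    have h1 : ‖(inner ℂ (Φ j) (Φ k) : ℂ)‖^2 < (1/Real.sqrt d)^2 :=
      pow_lt_pow_left₀ (hcoh j k hjk) (norm_nonneg _) (by norm_num)
    have h2 : (1/Real.sqrt d)^2 = (d:ℝ)⁻¹ := by
      rw [div_pow, one_pow, Real.sq_sqrt hd0.le, one_div]
    rw [hM]
    simp only [sub_neg]
    rw [← h2]; exact h1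
  -- the embedding vectors
  set f : Fin n → EuclideanSpace ℂ (Fin d × Fin d) :=
    fun j => (WithLp.equiv 2 _).symm
      (fun ab : Fin d × Fin d => Φ j ab.1 * (starRingEnd ℂ) (Φ j ab.2)) with hfdef
  set e : EuclideanSpace ℂ (Fin d × Fin d) :=
    (WithLp.equiv 2 _).symm
      (fun ab : Fin d × Fin d => if ab.1 = ab.2 then (1:ℂ) else 0) with hedef
  have hinnerΦ : ∀ j k : Fin n,
      (inner ℂ (Φ j) (Φ k) : ℂ) = ∑ a, (starRingEnd ℂ) (Φ j a) * Φ k a := by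
    intro j k
    rw [PiLp.inner_apply]
    simp [RCLike.inner_apply']
    exact Finset.sum_congr rfl fun _ _ => mul_comm _ _
  have hff : ∀ j k : Fin n,
      (inner ℂ (f j) (f k) : ℂ) = ((‖(inner ℂ (Φ j) (Φ k) : ℂ)‖^2 : ℝ) : ℂ) := by
    intro j k
    have step1 : (inner ℂ (f j) (f k) : ℂ) =
        ∑ a : Fin d, ∑ b : Fin d,
          ((starRingEnd ℂ) (Φ j a) * Φ k a) * (Φ j b * (starRingEnd ℂ) (Φ k b)) := by
      rw [PiLp.inner_apply, Fintype.sum_prod_type]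
      refine Finset.sum_congr rfl fun a _ => Finset.sum_congr rfl fun b _ => ?_
      simp only [hfdef, WithLp.equiv_symm_apply, WithLp.ofLp_toLp, RCLike.inner_apply', map_mul,
        RingHom.id_apply, RingHomCompTriple.comp_apply, RCLike.conj_conj, Complex.conj_conj]
      ring
    have step2 : ∑ b : Fin d, Φ j b * (starRingEnd ℂ) (Φ k b)
        = (starRingEnd ℂ) (inner ℂ (Φ j) (Φ k) : ℂ) := by
      rw [hinnerΦ, map_sum]
      refine Finset.sum_congr rfl fun b _ => ?_
      simp [mul_comm]
    rw [step1, ← Finset.sum_mul_sum, ← hinnerΦ, step2, RCLike.mul_conj]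
    norm_cast
  have hfe : ∀ j : Fin n, (inner ℂ (f j) e : ℂ) = 1 := by
    intro j
    rw [PiLp.inner_apply, Fintype.sum_prod_type]
    simp only [hfdef, hedef, WithLp.equiv_symm_apply, WithLp.ofLp_toLp, RCLike.inner_apply']
    have : ∀ a : Fin d, (∑ b : Fin d,
        (starRingEnd ℂ) (Φ j a * (starRingEnd ℂ) (Φ j b)) * (if a = b then (1:ℂ) else 0))
        = (starRingEnd ℂ) (Φ j a) * Φ j a := by
      intro a
      rw [Finset.sum_eq_single a]
      · simp
      · intro b _ hb; simp [Ne.symm hb]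
      · simp
    rw [Finset.sum_congr rfl fun a _ => this a, ← hinnerΦ]
    rw [inner_self_eq_norm_sq_to_K, hunit j]
    norm_num
  have hef : ∀ j : Fin n, (inner ℂ e (f j) : ℂ) = 1 := by
    intro j
    rw [← inner_conj_symm, hfe, map_one]
  have hee : (inner ℂ e e : ℂ) = (d : ℂ) := by
    rw [PiLp.inner_apply, Fintype.sum_prod_type]
    simp only [hedef, WithLp.equiv_symm_apply, WithLp.ofLp_toLp, RCLike.inner_apply']
    have : ∀ a : Fin d, (∑ b : Fin d,
        (starRingEnd ℂ) (if a = b then (1:ℂ) else 0) * (if a = b then (1:ℂ) else 0)) = 1 := by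
      intro a
      rw [Finset.sum_eq_single a] <;> simp +contextual [Ne.symm]
    rw [Finset.sum_congr rfl fun a _ => this a]
    simp
  set g : Fin n → EuclideanSpace ℂ (Fin d × Fin d) :=
    fun j => f j - ((d:ℂ))⁻¹ • e with hgdef
  have hgg : ∀ j k : Fin n, (inner ℂ (g j) (g k) : ℂ) = ((M j k : ℝ) : ℂ) := by
    intro j k
    rw [hgdef]
    simp only [inner_sub_left, inner_sub_right, inner_smul_left, inner_smul_right,
      hff, hfe, hef, hee, map_inv₀, Complex.conj_natCast]
    rw [hM]
    push_cast
    field_simp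
    ring
  have heg : ∀ j : Fin n, (inner ℂ e (g j) : ℂ) = 0 := by
    intro j
    rw [hgdef]
    simp only [inner_sub_right, inner_smul_right, hef, hee]
    field_simp
    ring
  have he0 : e ≠ 0 := by
    intro h
    rw [h, inner_zero_left] at hee
    exact hdC hee.symm
  -- linear map and kernel
  have hn0 : 0 < n := lt_trans (by positivity) hn
  set i₀ : Fin n := ⟨0, hn0⟩ with hi₀
  let L : (Fin n → ℂ) →ₗ[ℂ] EuclideanSpace ℂ (Fin d × Fin d) :=
    { toFun := fun c => ∑ j, c j • g j
      map_add' := fun a b => by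
        simp only [Pi.add_apply, add_smul]
        rw [Finset.sum_add_distrib]
      map_smul' := fun r a => by
        simp only [Pi.smul_apply, smul_eq_mul, RingHom.id_apply, Finset.smul_sum, smul_smul] }
  have hrange : ∀ c, L c ∈ (ℂ ∙ e)ᗮ := by
    intro c
    rw [Submodule.mem_orthogonal_singleton_iff_inner_right]
    show (inner ℂ e (∑ j, c j • g j) : ℂ) = 0
    rw [inner_sum]
    simp [inner_smul_right, heg]
  set K : (Fin n → ℂ) →ₗ[ℂ] ((ℂ ∙ e)ᗮ × ℂ) :=
    (L.codRestrict (ℂ ∙ e)ᗮ hrange).prod (LinearMap.proj i₀) with hK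
  have hd2 : 1 ≤ d^2 := Nat.one_le_pow _ _ (by omega)
  haveI : Fact (Module.finrank ℂ (EuclideanSpace ℂ (Fin d × Fin d)) = (d^2 - 1) + 1) :=
    ⟨by simp only [finrank_euclideanSpace, Fintype.card_prod, Fintype.card_fin]
        rw [Nat.sub_add_cancel hd2, pow_two]⟩
  have hfr : Module.finrank ℂ ((ℂ ∙ e)ᗮ) = d^2 - 1 :=
    Submodule.finrank_orthogonal_span_singleton he0
  have hker : LinearMap.ker K ≠ ⊥ := by
    apply LinearMap.ker_ne_bot_of_finrank_lt
    rw [Module.finrank_prod, hfr, Module.finrank_self,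
      Module.finrank_fintype_fun_eq_card, Fintype.card_fin]
    omega
  obtain ⟨c, hcK, hc0⟩ := Submodule.ne_bot_iff _ |>.mp hker
  have hLc : ∑ j, c j • g j = 0 := by
    have h1 : L c = 0 := by
      have := congrArg Prod.fst hcK
      simpa [hK, Subtype.ext_iff] using this
    exact h1
  have hci₀ : c i₀ = 0 := congrArg Prod.snd hcK
  have hMc : ∀ i : Fin n, ∑ j, c j * ((M i j : ℝ) : ℂ) = 0 := by
    intro i
    have h1 : (inner ℂ (g i) (∑ j, c j • g j) : ℂ) = ∑ j, c j * ((M i j : ℝ) : ℂ) := by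
      rw [inner_sum]
      refine Finset.sum_congr rfl fun j _ => ?_
      rw [inner_smul_right, hgg]
    rw [hLc, inner_zero_right] at h1
    exact h1.symm
  -- key combinatorial claim
  have hcomb : ∀ y z : Fin n → ℝ,
      (inner ℂ (∑ j, ((y j : ℝ) : ℂ) • g j) (∑ j, ((z j : ℝ) : ℂ) • g j) : ℂ)
        = ((∑ i, ∑ j, y i * z j * M i j : ℝ) : ℂ) := by
    intro y z
    rw [sum_inner]
    push_cast
    refine Finset.sum_congr rfl fun i _ => ?_
    rw [inner_sum]
    refine Finset.sum_congr rfl fun j _ => ?_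
    rw [inner_smul_left, inner_smul_right, hgg, Complex.conj_ofReal]
    push_cast
    ring
  have key : ∀ y : Fin n → ℝ, (∀ j, 0 ≤ y j) → y i₀ = 0 →
      (∑ j, ((y j : ℝ) : ℂ) • g j) = 0 → y = 0 := by
    intro y hy hyi₀ hy0
    by_contra hne
    obtain ⟨j₂, hj₂⟩ : ∃ j, y j ≠ 0 := by
      by_contra h
      push_neg at h
      exact hne (funext h)
    have hj₂pos : 0 < y j₂ := lt_of_le_of_ne (hy j₂) (Ne.symm hj₂)
    have hj₂i₀ : j₂ ≠ i₀ := fun h => hj₂ (by rw [h]; exact hyi₀)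
    have h0 : ∑ j, y j * M i₀ j = 0 := by
      have h1 : (inner ℂ (g i₀) (∑ j, ((y j : ℝ) : ℂ) • g j) : ℂ)
          = ((∑ j, y j * M i₀ j : ℝ) : ℂ) := by
        rw [inner_sum]
        push_cast
        refine Finset.sum_congr rfl fun j _ => ?_
        rw [inner_smul_right, hgg]
      rw [hy0, inner_zero_right] at h1
      exact_mod_cast h1.symm
    have hlt : ∑ j, y j * M i₀ j < 0 := by
      have := Finset.sum_lt_sum (s := Finset.univ)
        (f := fun j => y j * M i₀ j) (g := fun _ => (0:ℝ))
        (fun j _ => by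
          rcases eq_or_ne j i₀ with h | h
          · simp [h, hyi₀]
          · exact mul_nonpos_of_nonneg_of_nonpos (hy j) (hMneg i₀ j (Ne.symm h)).le)
        ⟨j₂, Finset.mem_univ _, mul_neg_of_pos_of_neg hj₂pos (hMneg i₀ j₂ (Ne.symm hj₂i₀))⟩
      simpa using this
    exact absurd h0 hlt.ne
  -- the real-coefficient argument
  have main : ∀ x : Fin n → ℝ, (∀ i, ∑ j, x j * M i j = 0) → x i₀ = 0 → x = 0 := by
    intro x hxM hxi₀
    set p : Fin n → ℝ := fun j => max (x j) 0 with hp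
    set q : Fin n → ℝ := fun j => max (-x j) 0 with hq
    have hpq : ∀ j, x j = p j - q j := by
      intro j
      rw [hp, hq]
      rcases le_total (x j) 0 with h | h
      · simp [max_eq_right h, max_eq_left (neg_nonneg.mpr h)]
      · simp [max_eq_left h, max_eq_right (neg_nonpos.mpr h)]
    have hpnn : ∀ j, 0 ≤ p j := fun j => le_max_right _ _
    have hqnn : ∀ j, 0 ≤ q j := fun j => le_max_right _ _
    have hpqz : ∀ j, p j * q j = 0 := by
      intro j
      rcases le_total (x j) 0 with h | h
      · rw [hp]; simp [max_eq_right h]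
      · rw [hq]; simp [max_eq_right (neg_nonpos.mpr h)]
    -- x-combination is zero
    have hx0 : (∑ j, ((x j : ℝ) : ℂ) • g j) = 0 := by
      rw [← inner_self_eq_zero (𝕜 := ℂ)]
      rw [hcomb x x]
      norm_cast
      calc ∑ i, ∑ j, x i * x j * M i j = ∑ i, x i * ∑ j, x j * M i j := by
            refine Finset.sum_congr rfl fun i _ => ?_
            rw [Finset.mul_sum]
            exact Finset.sum_congr rfl fun j _ => by ring
        _ = 0 := by simp [hxM]
    have huv : (∑ j, ((p j : ℝ) : ℂ) • g j) = (∑ j, ((q j : ℝ) : ℂ) • g j) := by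
      have : (∑ j, ((x j : ℝ) : ℂ) • g j)
          = (∑ j, ((p j : ℝ) : ℂ) • g j) - (∑ j, ((q j : ℝ) : ℂ) • g j) := by
        rw [← Finset.sum_sub_distrib]
        refine Finset.sum_congr rfl fun j _ => ?_
        rw [hpq j]
        push_cast
        rw [sub_smul]
      rw [hx0] at this
      exact (sub_eq_zero.mp this.symm)
    have hpMq : ∑ i, ∑ j, p i * q j * M i j ≤ 0 := by
      apply Finset.sum_nonpos
      intro i _
      apply Finset.sum_nonpos
      intro j _
      rcases eq_or_ne i j with h | h
      · subst h
        rw [hpqz i, zero_mul]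
      · exact mul_nonpos_of_nonneg_of_nonpos (mul_nonneg (hpnn i) (hqnn j))
          (hMneg i j h).le
    have h1 : (inner ℂ (∑ j, ((p j : ℝ) : ℂ) • g j) (∑ j, ((p j : ℝ) : ℂ) • g j) : ℂ)
        = ((∑ i, ∑ j, p i * q j * M i j : ℝ) : ℂ) := by
      nth_rewrite 2 [huv]
      exact hcomb p q
    have h2 : 0 ≤ ∑ i, ∑ j, p i * q j * M i j := by
      have h3 := inner_self_nonneg (𝕜 := ℂ) (x := ∑ j, ((p j : ℝ) : ℂ) • g j)
      rw [h1] at h3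
      simpa using h3
    have hpMq0 : ∑ i, ∑ j, p i * q j * M i j = 0 := le_antisymm hpMq h2
    have hu0 : (∑ j, ((p j : ℝ) : ℂ) • g j) = 0 := by
      rw [← inner_self_eq_zero (𝕜 := ℂ), h1, hpMq0]
      norm_num
    have hv0 : (∑ j, ((q j : ℝ) : ℂ) • g j) = 0 := by
      rw [← huv]; exact hu0
    have hp0 : p = 0 := key p hpnn (by rw [hp]; simp [hxi₀]) hu0
    have hq0 : q = 0 := key q hqnn (by rw [hq]; simp [hxi₀]) hv0
    funext j
    have := hpq j
    rw [hp0, hq0] at this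
    simpa using this
  -- apply to real and imaginary parts of c
  have hre : (fun j => (c j).re) = 0 := by
    apply main
    · intro i
      have h1 := congrArg Complex.re (hMc i)
      rw [Complex.re_sum] at h1
      simpa [Complex.mul_re] using h1
    · simp [hci₀]
  have him : (fun j => (c j).im) = 0 := by
    apply main
    · intro i
      have h1 := congrArg Complex.im (hMc i)
      rw [Complex.im_sum] at h1
      simpa [Complex.mul_im] using h1
    · simp [hci₀]
  apply hc0
  funext j
  exact Complex.ext (congrFun hre j) (congrFun him j)
end

section
/- (Orthoplex bound, real case) Let d, n be positive integers with d ≥ 2 and n > d(d+1)/2, and let Φ = (φ_1, …, φ_n) be any family of unit vectors in ℝ^d. Then μ(Φ) ≥ 1/√d. -/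
/-- Orthoplex bound, real case: any `n > d(d+1)/2` unit vectors in `ℝ^d`
(`d ≥ 2`) satisfy `μ(Φ) ≥ 1/√d`. -/
theorem orthoplex_bound_real {d n : ℕ} (hd : 2 ≤ d) (hn : d * (d + 1) / 2 < n)
    (Φ : Fin n → EuclideanSpace ℝ (Fin d))
    (hunit : ∀ j, ‖Φ j‖ = 1) :
    1 / Real.sqrt d ≤ coherence Φ := by
  classical
  set μ := coherence Φ with hμdef
  have hμ0 : 0 ≤ μ := NNReal.coe_nonneg _
  -- inner products as sums
  have hinner : ∀ j k : Fin n, (inner ℝ (Φ j) (Φ k) : ℝ) = ∑ a, Φ j a * Φ k a := by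
    intro j k
    simp [PiLp.inner_apply, RCLike.inner_apply, conj_trivial, mul_comm]
  have hnormsq : ∀ j : Fin n, ∑ a, Φ j a * Φ j a = 1 := by
    intro j
    have := real_inner_self_eq_norm_sq (Φ j)
    rw [hinner j j] at this
    rw [this, hunit j]; norm_num
  -- pairwise bound by coherence
  have hpair : ∀ j k : Fin n, j ≠ k → |(inner ℝ (Φ j) (Φ k) : ℝ)| ≤ μ := by
    intro j k hjk
    have hmem : (j, k) ∈ Finset.univ.filter
        (fun p : Fin n × Fin n => p.1 ≠ p.2) := by simp [hjk]
    have hle := Finset.le_sup (f := fun p : Fin n × Fin n =>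
      ‖(inner ℝ (Φ p.1) (Φ p.2) : ℝ)‖₊) hmem
    have := NNReal.coe_le_coe.2 hle
    simpa [hμdef, coherence, Real.norm_eq_abs] using this
  -- linear dependence of the symmetric outer products
  set w : Fin n → (Sym2 (Fin d) → ℝ) := fun j =>
    Sym2.lift ⟨fun a b => Φ j a * Φ j b, fun a b => mul_comm _ _⟩ with hw
  have hdep : ¬ LinearIndependent ℝ w := by
    intro h
    have hcard := h.fintype_card_le_finrank
    rw [Module.finrank_fintype_fun_eq_card, Fintype.card_fin] at hcard
    have : Fintype.card (Sym2 (Fin d)) = d * (d + 1) / 2 := by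
      rw [Sym2.card, Fintype.card_fin, Nat.choose_two_right]
      simp [Nat.mul_comm]
    omega
  obtain ⟨c, hsum, j₀, hj₀⟩ := Fintype.not_linearIndependent_iff.mp hdep
  have hF : ∀ a b : Fin d, ∑ j, c j * (Φ j a * Φ j b) = 0 := by
    intro a b
    have := congrFun hsum s(a, b)
    simpa [hw, Finset.sum_apply, Sym2.lift_mk] using this
  -- positive and negative parts
  set P : Finset (Fin n) := Finset.univ.filter (fun j => 0 < c j) with hP
  set N : Finset (Fin n) := Finset.univ.filter (fun j => c j < 0) with hN
  have hkey : ∀ f : Fin n → ℝ, (∀ j, c j = 0 → f j = 0) →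
      ∑ j ∈ P, f j + ∑ j ∈ N, f j = ∑ j, f j := by
    intro f hf
    rw [← Finset.sum_filter_add_sum_filter_not Finset.univ (fun j => 0 < c j) f]
    congr 1
    refine Finset.sum_subset ?_ ?_
    · intro j hj
      simp only [hN, Finset.mem_filter, Finset.mem_univ, true_and] at hj
      simp only [Finset.mem_filter, Finset.mem_univ, true_and, not_lt]
      exact le_of_lt hj
    · intro j hj hj2
      simp only [Finset.mem_filter, Finset.mem_univ, true_and, not_lt] at hj
      simp only [hN, Finset.mem_filter, Finset.mem_univ, true_and, not_lt] at hj2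
      exact hf j (le_antisymm hj hj2)
  -- the trace identity
  have htr : ∑ j, c j = 0 := by
    have h1 : ∑ a : Fin d, ∑ j, c j * (Φ j a * Φ j a) = 0 := by simp [hF]
    rw [Finset.sum_comm] at h1
    calc ∑ j, c j = ∑ j, c j * ∑ a, Φ j a * Φ j a := by
          refine Finset.sum_congr rfl fun j _ => ?_
          rw [hnormsq j, mul_one]
      _ = 0 := by rw [← h1]; exact Finset.sum_congr rfl fun j _ => Finset.mul_sum _ _ _
  set s : ℝ := ∑ j ∈ P, c j with hs
  have hsN : ∑ j ∈ N, c j = -s := by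
    have := hkey c (fun j h => h)
    rw [htr] at this; linarith
  -- s > 0
  have hspos : 0 < s := by
    rcases lt_or_gt_of_ne hj₀ with hneg | hpos
    · have hj₀N : j₀ ∈ N := by simp [hN, hneg]
      have : ∑ j ∈ N, c j < 0 := by
        refine Finset.sum_neg (fun j hj => ?_) ⟨j₀, hj₀N⟩
        simpa [hN] using hj
      linarith [hsN]
    · have hj₀P : j₀ ∈ P := by simp [hP, hpos]
      refine Finset.sum_pos (fun j hj => ?_) ⟨j₀, hj₀P⟩
      simpa [hP] using hj
  -- the matrix S and its two representations
  set S : Fin d → Fin d → ℝ := fun a b => ∑ j ∈ P, c j * (Φ j a * Φ j b) with hS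
  have hSneg : ∀ a b, S a b = ∑ k ∈ N, (-c k) * (Φ k a * Φ k b) := by
    intro a b
    have := hkey (fun j => c j * (Φ j a * Φ j b)) (fun j h => by simp [h])
    rw [hF a b] at this
    have h2 : ∑ j ∈ N, c j * (Φ j a * Φ j b) = -S a b := by rw [hS]; linarith
    calc S a b = -∑ j ∈ N, c j * (Φ j a * Φ j b) := by rw [h2]; ring
      _ = ∑ k ∈ N, (-c k) * (Φ k a * Φ k b) := by
          rw [← Finset.sum_neg_distrib]
          exact Finset.sum_congr rfl fun k _ => by ring
  -- trace of S equals s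
  have htrS : ∑ a, S a a = s := by
    rw [hS, Finset.sum_comm]
    refine Finset.sum_congr rfl fun j _ => ?_
    rw [← Finset.mul_sum, hnormsq j, mul_one]
  -- inner products
  set A : Fin n → Fin n → ℝ := fun j k => ∑ a, Φ j a * Φ k a with hA
  have hApair : ∀ j k, j ≠ k → A j k ^ 2 ≤ μ ^ 2 := by
    intro j k hjk
    have h1 : |A j k| ≤ μ := by
      have := hpair j k hjk
      rw [hinner j k] at this
      simpa [hA] using this
    calc A j k ^ 2 = |A j k| ^ 2 := (sq_abs _).symm
      _ ≤ μ ^ 2 := pow_le_pow_left₀ (abs_nonneg _) h1 2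
  -- the Frobenius norm of S, expanded as a double sum over P × N
  have hB : ∑ a, ∑ b, S a b * S a b
      = ∑ j ∈ P, ∑ k ∈ N, c j * (-c k) * (A j k * A j k) := by
    have h1 : ∀ a b : Fin d, S a b * S a b
        = ∑ j ∈ P, ∑ k ∈ N, (c j * (Φ j a * Φ j b)) * ((-c k) * (Φ k a * Φ k b)) := by
      intro a b
      have e : S a b * S a b
          = (∑ j ∈ P, c j * (Φ j a * Φ j b)) * ∑ k ∈ N, (-c k) * (Φ k a * Φ k b) := by
        rw [← hSneg a b]
      rw [e, Finset.sum_mul_sum]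
    have h2 : ∀ j k : Fin n, ∑ a, ∑ b,
        (c j * (Φ j a * Φ j b)) * ((-c k) * (Φ k a * Φ k b))
        = c j * (-c k) * (A j k * A j k) := by
      intro j k
      have e2 : A j k * A j k = ∑ a, ∑ b, (Φ j a * Φ k a) * (Φ j b * Φ k b) := by
        rw [show A j k = ∑ a, Φ j a * Φ k a from rfl, Finset.sum_mul_sum]
      rw [e2, Finset.mul_sum]
      refine Finset.sum_congr rfl fun a _ => ?_
      rw [Finset.mul_sum]
      refine Finset.sum_congr rfl fun b _ => ?_
      ring
    calc ∑ a, ∑ b, S a b * S a b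
        = ∑ a, ∑ b, ∑ j ∈ P, ∑ k ∈ N,
            (c j * (Φ j a * Φ j b)) * ((-c k) * (Φ k a * Φ k b)) := by
          exact Finset.sum_congr rfl fun a _ => Finset.sum_congr rfl fun b _ => h1 a b
      _ = ∑ a, ∑ j ∈ P, ∑ b, ∑ k ∈ N,
            (c j * (Φ j a * Φ j b)) * ((-c k) * (Φ k a * Φ k b)) := by
          exact Finset.sum_congr rfl fun a _ => Finset.sum_comm
      _ = ∑ j ∈ P, ∑ a, ∑ b, ∑ k ∈ N,
            (c j * (Φ j a * Φ j b)) * ((-c k) * (Φ k a * Φ k b)) := Finset.sum_comm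
      _ = ∑ j ∈ P, ∑ a, ∑ k ∈ N, ∑ b,
            (c j * (Φ j a * Φ j b)) * ((-c k) * (Φ k a * Φ k b)) := by
          exact Finset.sum_congr rfl fun j _ =>
            Finset.sum_congr rfl fun a _ => Finset.sum_comm
      _ = ∑ j ∈ P, ∑ k ∈ N, ∑ a, ∑ b,
            (c j * (Φ j a * Φ j b)) * ((-c k) * (Φ k a * Φ k b)) := by
          exact Finset.sum_congr rfl fun j _ => Finset.sum_comm
      _ = ∑ j ∈ P, ∑ k ∈ N, c j * (-c k) * (A j k * A j k) := by
          exact Finset.sum_congr rfl fun j _ => Finset.sum_congr rfl fun k _ => h2 j k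
  -- bound the Frobenius norm by μ² s²
  have hBle : ∑ a, ∑ b, S a b * S a b ≤ μ ^ 2 * (s * s) := by
    rw [hB]
    have h1 : ∑ j ∈ P, ∑ k ∈ N, c j * (-c k) * (A j k * A j k)
        ≤ ∑ j ∈ P, ∑ k ∈ N, c j * (-c k) * μ ^ 2 := by
      refine Finset.sum_le_sum fun j hj => Finset.sum_le_sum fun k hk => ?_
      have hcj : 0 < c j := by simpa [hP] using hj
      have hck : c k < 0 := by simpa [hN] using hk
      have hjk : j ≠ k := fun h => by rw [h] at hcj; linarith
      have hcoef : 0 ≤ c j * (-c k) := by nlinarith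
      have := hApair j k hjk
      rw [← sq] at *
      nlinarith
    refine h1.trans_eq ?_
    have hsN2 : ∑ x ∈ N, -c x = s := by
      rw [Finset.sum_neg_distrib, hsN, neg_neg]
    rw [Finset.sum_comm]
    have e3 : ∀ k, ∑ j ∈ P, c j * (-c k) * μ ^ 2 = (-c k) * μ ^ 2 * s := by
      intro k
      rw [hs, Finset.mul_sum]
      refine Finset.sum_congr rfl fun j _ => by ring
    calc ∑ k ∈ N, ∑ j ∈ P, c j * (-c k) * μ ^ 2
        = ∑ k ∈ N, (-c k) * μ ^ 2 * s := Finset.sum_congr rfl fun k _ => e3 k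
      _ = (∑ k ∈ N, -c k) * (μ ^ 2 * s) := by
          rw [Finset.sum_mul]
          exact Finset.sum_congr rfl fun k _ => by ring
      _ = μ ^ 2 * (s * s) := by rw [hsN2]; ring
  -- Cauchy–Schwarz on the diagonal
  have hCS : s ^ 2 ≤ (d : ℝ) * ∑ a, ∑ b, S a b * S a b := by
    have h1 : s ^ 2 ≤ (d : ℝ) * ∑ a, S a a ^ 2 := by
      have := sq_sum_le_card_mul_sum_sq (s := (Finset.univ : Finset (Fin d)))
        (f := fun a => S a a)
      rw [htrS] at this
      simpa using this
    refine h1.trans ?_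
    have hd0 : (0 : ℝ) ≤ d := Nat.cast_nonneg d
    refine mul_le_mul_of_nonneg_left ?_ hd0
    refine Finset.sum_le_sum fun a _ => ?_
    calc S a a ^ 2 = S a a * S a a := by ring
      _ ≤ ∑ b, S a b * S a b :=
          Finset.single_le_sum (f := fun b => S a b * S a b)
            (fun b _ => mul_self_nonneg _) (Finset.mem_univ a)
  -- conclude 1 ≤ d μ²
  have hfinal : 1 ≤ (d : ℝ) * μ ^ 2 := by
    have h2 : s ^ 2 ≤ (d : ℝ) * (μ ^ 2 * (s * s)) :=
      hCS.trans (mul_le_mul_of_nonneg_left hBle (Nat.cast_nonneg d))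
    have hss : s ^ 2 = s * s := sq s
    nlinarith [mul_pos hspos hspos, h2, hss]
  -- finish: μ ≥ 1/√d
  have hdpos : (0 : ℝ) < d := by positivity
  have h3 : 1 / (d : ℝ) ≤ μ ^ 2 := by
    rw [div_le_iff₀ hdpos]; linarith [hfinal]
  have h4 : Real.sqrt (1 / d) ≤ Real.sqrt (μ ^ 2) := Real.sqrt_le_sqrt h3
  rw [Real.sqrt_sq hμ0] at h4
  rw [one_div, Real.sqrt_inv, ← one_div] at h4
  exact h4
end

section
/- (Levenstein bound, real case) Let d, n be positive integers with d ≥ 2 and n > d(d+1)/2, and let Φ = (φ_1, …, φ_n) be any family of unit vectors in ℝ^d. Then μ(Φ) ≥ √((3n − d(d+2))/((n − d)(d + 2))). -/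
open Finset

section LevensteinAux

lemma lev_fact2 {d : ℕ} (f g : Fin d → ℝ) :
    (∑ a, f a) * (∑ a, g a) = ∑ a, ∑ b, f a * g b := Finset.sum_mul_sum _ _ _ _

lemma lev_fact3 {d : ℕ} (f g h : Fin d → ℝ) :
    (∑ a, f a) * (∑ a, g a) * (∑ a, h a) = ∑ a, ∑ b, ∑ c, f a * g b * h c := by
  rw [lev_fact2, Finset.sum_mul]
  refine Finset.sum_congr rfl fun a _ => ?_
  rw [Finset.sum_mul]
  refine Finset.sum_congr rfl fun b _ => ?_
  rw [Finset.mul_sum]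

lemma lev_fact4 {d : ℕ} (f g h k : Fin d → ℝ) :
    (∑ a, f a) * (∑ a, g a) * (∑ a, h a) * (∑ a, k a)
      = ∑ a, ∑ b, ∑ c, ∑ e, f a * g b * h c * k e := by
  rw [lev_fact3, Finset.sum_mul]
  refine Finset.sum_congr rfl fun a _ => ?_
  rw [Finset.sum_mul]
  refine Finset.sum_congr rfl fun b _ => ?_
  rw [Finset.sum_mul]
  refine Finset.sum_congr rfl fun c _ => ?_
  rw [Finset.mul_sum]

/-- `0 ≤ Σ_x (Σ_i F i x)^2`, expanded as a double sum over pairs. -/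
lemma lev_sos {n : ℕ} {α : Type*} [Fintype α] (F : Fin n → α → ℝ) :
    0 ≤ ∑ i, ∑ j, ∑ x, F i x * F j x := by
  have h : ∑ x, (∑ i, F i x)^2 = ∑ i, ∑ j, ∑ x, F i x * F j x := by
    simp_rw [sq, Finset.sum_mul_sum]
    rw [Finset.sum_comm]
    exact Finset.sum_congr rfl fun i _ => Finset.sum_comm
  rw [← h]
  positivity

lemma lev_mul_sum4 {d : ℕ} (r : ℝ) (f : Fin d → Fin d → Fin d → Fin d → ℝ) :
    ∑ a, ∑ b, ∑ c, ∑ e, r * f a b c e = r * ∑ a, ∑ b, ∑ c, ∑ e, f a b c e := by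
  simp only [← Finset.mul_sum]

lemma lev_mul_sum2 {d : ℕ} (r : ℝ) (f : Fin d → Fin d → ℝ) :
    ∑ a, ∑ b, r * f a b = r * ∑ a, ∑ b, f a b := by
  simp only [← Finset.mul_sum]

lemma lev_M0 {d : ℕ} (u v : Fin d → ℝ) :
    ∑ a, ∑ b, ∑ c, ∑ e, (u a * v a) * ((u b * v b) * ((u c * v c) * (u e * v e)))
      = (∑ a, u a * v a)^4 := by
  rw [show (∑ a, u a * v a)^4 = (∑ a, u a * v a) * (∑ a, u a * v a) * (∑ a, u a * v a)
      * (∑ a, u a * v a) by ring, lev_fact4]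
  exact Finset.sum_congr rfl fun a _ => Finset.sum_congr rfl fun b _ =>
    Finset.sum_congr rfl fun c _ => Finset.sum_congr rfl fun e _ => by ring

lemma lev_C1 {d : ℕ} (u v : Fin d → ℝ) :
    ∑ a, ∑ b, ∑ c, ∑ e, (if a = b then (1:ℝ) else 0) * ((u a * u b) * ((u c * v c) * (u e * v e)))
      = (∑ a, u a * u a) * ((∑ a, u a * v a) * (∑ a, u a * v a)) := by
  simp only [ite_mul, mul_ite, one_mul, mul_one, zero_mul, mul_zero, Finset.sum_ite_irrel,
    Finset.sum_const_zero, Finset.sum_ite_eq, Finset.mem_univ, if_true]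
  rw [show (∑ a, u a * u a) * ((∑ a, u a * v a) * (∑ a, u a * v a))
      = (∑ a, u a * u a) * (∑ a, u a * v a) * (∑ a, u a * v a) by ring, lev_fact3]
  exact Finset.sum_congr rfl fun a _ => Finset.sum_congr rfl fun b _ =>
    Finset.sum_congr rfl fun c _ => by ring

lemma lev_C2 {d : ℕ} (u v : Fin d → ℝ) :
    ∑ a, ∑ b, ∑ c, ∑ e, (if a = c then (1:ℝ) else 0) * ((u a * u c) * ((u b * v b) * (u e * v e)))
      = (∑ a, u a * u a) * ((∑ a, u a * v a) * (∑ a, u a * v a)) := by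
  simp only [ite_mul, mul_ite, one_mul, mul_one, zero_mul, mul_zero, Finset.sum_ite_irrel,
    Finset.sum_const_zero, Finset.sum_ite_eq, Finset.mem_univ, if_true]
  rw [show (∑ a, u a * u a) * ((∑ a, u a * v a) * (∑ a, u a * v a))
      = (∑ a, u a * u a) * (∑ a, u a * v a) * (∑ a, u a * v a) by ring, lev_fact3]
  exact Finset.sum_congr rfl fun a _ => Finset.sum_congr rfl fun b _ =>
    Finset.sum_congr rfl fun c _ => by ring

lemma lev_C3 {d : ℕ} (u v : Fin d → ℝ) :
    ∑ a, ∑ b, ∑ c, ∑ e, (if a = e then (1:ℝ) else 0) * ((u a * u e) * ((u b * v b) * (u c * v c)))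
      = (∑ a, u a * u a) * ((∑ a, u a * v a) * (∑ a, u a * v a)) := by
  simp only [ite_mul, mul_ite, one_mul, mul_one, zero_mul, mul_zero, Finset.sum_ite_irrel,
    Finset.sum_const_zero, Finset.sum_ite_eq, Finset.mem_univ, if_true]
  rw [show (∑ a, u a * u a) * ((∑ a, u a * v a) * (∑ a, u a * v a))
      = (∑ a, u a * u a) * (∑ a, u a * v a) * (∑ a, u a * v a) by ring, lev_fact3]
  exact Finset.sum_congr rfl fun a _ => Finset.sum_congr rfl fun b _ =>
    Finset.sum_congr rfl fun c _ => by ring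

lemma lev_D1 {d : ℕ} (u v : Fin d → ℝ) :
    ∑ a : Fin d, ∑ b : Fin d, ∑ c, ∑ e, (if a = b then (1:ℝ) else 0) * (if a = b then (1:ℝ) else 0)
        * ((u c * v c) * (u e * v e))
      = (d : ℝ) * ((∑ a, u a * v a) * (∑ a, u a * v a)) := by
  simp only [ite_mul, mul_ite, one_mul, mul_one, zero_mul, mul_zero, Finset.sum_ite_irrel,
    Finset.sum_const_zero, Finset.sum_ite_eq, Finset.mem_univ, if_true]
  rw [Finset.sum_const, Finset.card_univ, Fintype.card_fin, nsmul_eq_mul, lev_fact2]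

lemma lev_D2 {d : ℕ} (u v : Fin d → ℝ) :
    ∑ a : Fin d, ∑ b, ∑ c : Fin d, ∑ e, (if a = c then (1:ℝ) else 0) * (if a = c then (1:ℝ) else 0)
        * ((u b * v b) * (u e * v e))
      = (d : ℝ) * ((∑ a, u a * v a) * (∑ a, u a * v a)) := by
  simp only [ite_mul, mul_ite, one_mul, mul_one, zero_mul, mul_zero, Finset.sum_ite_irrel,
    Finset.sum_const_zero, Finset.sum_ite_eq, Finset.mem_univ, if_true]
  rw [Finset.sum_const, Finset.card_univ, Fintype.card_fin, nsmul_eq_mul, lev_fact2]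

lemma lev_D3 {d : ℕ} (u v : Fin d → ℝ) :
    ∑ a : Fin d, ∑ b, ∑ c, ∑ e : Fin d, (if a = e then (1:ℝ) else 0) * (if a = e then (1:ℝ) else 0)
        * ((u b * v b) * (u c * v c))
      = (d : ℝ) * ((∑ a, u a * v a) * (∑ a, u a * v a)) := by
  simp only [ite_mul, mul_ite, one_mul, mul_one, zero_mul, mul_zero, Finset.sum_ite_irrel,
    Finset.sum_const_zero, Finset.sum_ite_eq, Finset.mem_univ, if_true]
  rw [Finset.sum_const, Finset.card_univ, Fintype.card_fin, nsmul_eq_mul, lev_fact2]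

lemma lev_E12 {d : ℕ} (u v : Fin d → ℝ) :
    ∑ a : Fin d, ∑ b : Fin d, ∑ c : Fin d, ∑ e,
        (if a = b then (1:ℝ) else 0) * ((if a = c then (1:ℝ) else 0) * ((v b * u c) * (u e * v e)))
      = (∑ a, u a * v a) * (∑ a, u a * v a) := by
  simp only [ite_mul, mul_ite, one_mul, mul_one, zero_mul, mul_zero, Finset.sum_ite_irrel,
    Finset.sum_const_zero, Finset.sum_ite_eq, Finset.mem_univ, if_true]
  rw [lev_fact2]
  exact Finset.sum_congr rfl fun a _ => Finset.sum_congr rfl fun e _ => by ring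

lemma lev_E13 {d : ℕ} (u v : Fin d → ℝ) :
    ∑ a : Fin d, ∑ b : Fin d, ∑ c, ∑ e : Fin d,
        (if a = b then (1:ℝ) else 0) * ((if a = e then (1:ℝ) else 0) * ((v b * u e) * (u c * v c)))
      = (∑ a, u a * v a) * (∑ a, u a * v a) := by
  simp only [ite_mul, mul_ite, one_mul, mul_one, zero_mul, mul_zero, Finset.sum_ite_irrel,
    Finset.sum_const_zero, Finset.sum_ite_eq, Finset.mem_univ, if_true]
  rw [lev_fact2]
  exact Finset.sum_congr rfl fun a _ => Finset.sum_congr rfl fun c _ => by ring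

lemma lev_E23 {d : ℕ} (u v : Fin d → ℝ) :
    ∑ a : Fin d, ∑ b, ∑ c : Fin d, ∑ e : Fin d,
        (if a = c then (1:ℝ) else 0) * ((if a = e then (1:ℝ) else 0) * ((u b * v b) * (u e * v c)))
      = (∑ a, u a * v a) * (∑ a, u a * v a) := by
  simp only [ite_mul, mul_ite, one_mul, mul_one, zero_mul, mul_zero, Finset.sum_ite_irrel,
    Finset.sum_const_zero, Finset.sum_ite_eq, Finset.mem_univ, if_true]
  rw [lev_fact2]
  exact Finset.sum_congr rfl fun a _ => Finset.sum_congr rfl fun b _ => by ring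

/-- The degree-4 "harmonic projection" tensor of a vector `v`. -/
noncomputable def levG {d : ℕ} (α : ℝ) (v : Fin d → ℝ) :
    Fin d × Fin d × Fin d × Fin d → ℝ := fun p =>
  v p.1 * v p.2.1 * v p.2.2.1 * v p.2.2.2
    - α * ((if p.1 = p.2.1 then (1:ℝ) else 0) * (v p.2.2.1 * v p.2.2.2)
        + (if p.1 = p.2.2.1 then (1:ℝ) else 0) * (v p.2.1 * v p.2.2.2)
        + (if p.1 = p.2.2.2 then (1:ℝ) else 0) * (v p.2.1 * v p.2.2.1))

lemma lev_expand {d : ℕ} (α : ℝ) (x y : Fin d → ℝ) (a b c e : Fin d) :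
    levG α x (a, b, c, e) * levG α y (a, b, c, e) =
      (x a * y a) * ((x b * y b) * ((x c * y c) * (x e * y e)))
      - α * ((if a = b then (1:ℝ) else 0) * ((x a * x b) * ((x c * y c) * (x e * y e))))
      - α * ((if a = c then (1:ℝ) else 0) * ((x a * x c) * ((x b * y b) * (x e * y e))))
      - α * ((if a = e then (1:ℝ) else 0) * ((x a * x e) * ((x b * y b) * (x c * y c))))
      - α * ((if a = b then (1:ℝ) else 0) * ((y a * y b) * ((y c * x c) * (y e * x e))))
      - α * ((if a = c then (1:ℝ) else 0) * ((y a * y c) * ((y b * x b) * (y e * x e))))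
      - α * ((if a = e then (1:ℝ) else 0) * ((y a * y e) * ((y b * x b) * (y c * x c))))
      + α^2 * ((if a = b then (1:ℝ) else 0) * (if a = b then (1:ℝ) else 0) * ((x c * y c) * (x e * y e)))
      + α^2 * ((if a = c then (1:ℝ) else 0) * (if a = c then (1:ℝ) else 0) * ((x b * y b) * (x e * y e)))
      + α^2 * ((if a = e then (1:ℝ) else 0) * (if a = e then (1:ℝ) else 0) * ((x b * y b) * (x c * y c)))
      + α^2 * ((if a = b then (1:ℝ) else 0) * ((if a = c then (1:ℝ) else 0) * ((y b * x c) * (x e * y e))))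
      + α^2 * ((if a = b then (1:ℝ) else 0) * ((if a = e then (1:ℝ) else 0) * ((y b * x e) * (x c * y c))))
      + α^2 * ((if a = c then (1:ℝ) else 0) * ((if a = e then (1:ℝ) else 0) * ((x b * y b) * (x e * y c))))
      + α^2 * ((if a = b then (1:ℝ) else 0) * ((if a = c then (1:ℝ) else 0) * ((x b * y c) * (y e * x e))))
      + α^2 * ((if a = b then (1:ℝ) else 0) * ((if a = e then (1:ℝ) else 0) * ((x b * y e) * (y c * x c))))
      + α^2 * ((if a = c then (1:ℝ) else 0) * ((if a = e then (1:ℝ) else 0) * ((y b * x b) * (y e * x c))))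
      := by
  simp only [levG]
  ring

lemma lev_pair4 {d : ℕ} (x y : Fin d → ℝ) (hx : ∑ a, x a * x a = 1)
    (hy : ∑ a, y a * y a = 1) :
    ∑ p : Fin d × Fin d × Fin d × Fin d,
        levG (1/((d:ℝ)+2)) x p * levG (1/((d:ℝ)+2)) y p
      = (∑ a, x a * y a)^4 - 3/((d:ℝ)+2) * (∑ a, x a * y a)^2 := by
  have hyx : (∑ a, y a * x a) = ∑ a, x a * y a :=
    Finset.sum_congr rfl fun a _ => mul_comm _ _
  simp only [Fintype.sum_prod_type]
  simp_rw [lev_expand]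
  simp only [Finset.sum_sub_distrib, Finset.sum_add_distrib]
  simp_rw [lev_mul_sum4]
  rw [lev_M0, lev_C1 x y, lev_C2 x y, lev_C3 x y, lev_C1 y x, lev_C2 y x, lev_C3 y x,
    lev_D1, lev_D2, lev_D3, lev_E12 x y, lev_E13 x y, lev_E23 x y,
    lev_E12 y x, lev_E13 y x, lev_E23 y x, hx, hy, hyx]
  have hd2 : ((d:ℝ)+2) ≠ 0 := by positivity
  field_simp
  ring

/-- Fourth-moment bound: `Σ_{ij} s_{ij}^4 ≥ 3/(d+2) Σ_{ij} s_{ij}^2`. -/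
lemma lev_factB {d n : ℕ} (φ : Fin n → Fin d → ℝ)
    (hφ : ∀ i, ∑ a, φ i a * φ i a = 1) :
    0 ≤ ∑ i, ∑ j, ((∑ a, φ i a * φ j a)^4 - 3/((d:ℝ)+2) * (∑ a, φ i a * φ j a)^2) := by
  have h0 := lev_sos (F := fun i => levG (1/((d:ℝ)+2)) (φ i))
  exact h0.trans (le_of_eq (Finset.sum_congr rfl fun i _ =>
    Finset.sum_congr rfl fun j _ => lev_pair4 _ _ (hφ i) (hφ j)))

/-- Degree-2 analog. -/
noncomputable def levG2 {d : ℕ} (β : ℝ) (v : Fin d → ℝ) : Fin d × Fin d → ℝ := fun p =>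
  v p.1 * v p.2 - β * (if p.1 = p.2 then (1:ℝ) else 0)

lemma lev_expand2 {d : ℕ} (β : ℝ) (x y : Fin d → ℝ) (a b : Fin d) :
    levG2 β x (a, b) * levG2 β y (a, b) =
      (x a * y a) * (x b * y b)
      - β * ((if a = b then (1:ℝ) else 0) * (x a * x b))
      - β * ((if a = b then (1:ℝ) else 0) * (y a * y b))
      + β^2 * ((if a = b then (1:ℝ) else 0) * (if a = b then (1:ℝ) else 0)) := by
  simp only [levG2]
  ring

lemma lev_Q0 {d : ℕ} (u v : Fin d → ℝ) :
    ∑ a, ∑ b, (u a * v a) * (u b * v b) = (∑ a, u a * v a)^2 := by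
  rw [sq, lev_fact2]

lemma lev_QC {d : ℕ} (u : Fin d → ℝ) :
    ∑ a, ∑ b, (if a = b then (1:ℝ) else 0) * (u a * u b) = ∑ a, u a * u a := by
  simp only [ite_mul, mul_ite, one_mul, mul_one, zero_mul, mul_zero, Finset.sum_ite_irrel,
    Finset.sum_const_zero, Finset.sum_ite_eq, Finset.mem_univ, if_true]

lemma lev_QD {d : ℕ} :
    ∑ a : Fin d, ∑ b : Fin d, (if a = b then (1:ℝ) else 0) * (if a = b then (1:ℝ) else 0)
      = (d : ℝ) := by
  simp only [ite_mul, mul_ite, one_mul, mul_one, zero_mul, mul_zero, Finset.sum_ite_irrel,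
    Finset.sum_const_zero, Finset.sum_ite_eq, Finset.mem_univ, if_true]
  rw [Finset.sum_const, Finset.card_univ, Fintype.card_fin, nsmul_eq_mul, mul_one]

lemma lev_pair2 {d : ℕ} (hd : 0 < d) (x y : Fin d → ℝ) (hx : ∑ a, x a * x a = 1)
    (hy : ∑ a, y a * y a = 1) :
    ∑ p : Fin d × Fin d, levG2 (1/(d:ℝ)) x p * levG2 (1/(d:ℝ)) y p
      = (∑ a, x a * y a)^2 - 1/(d:ℝ) := by
  simp only [Fintype.sum_prod_type]
  simp_rw [lev_expand2]
  simp only [Finset.sum_sub_distrib, Finset.sum_add_distrib]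
  simp_rw [lev_mul_sum2]
  rw [lev_Q0, lev_QC x, lev_QC y, lev_QD, hx, hy]
  have hd0 : ((d:ℝ)) ≠ 0 := by positivity
  field_simp
  ring

/-- Second-moment bound: `Σ_{ij} s_{ij}^2 ≥ n^2/d`. -/
lemma lev_factA {d n : ℕ} (hd : 0 < d) (φ : Fin n → Fin d → ℝ)
    (hφ : ∀ i, ∑ a, φ i a * φ i a = 1) :
    0 ≤ ∑ i, ∑ j, ((∑ a, φ i a * φ j a)^2 - 1/(d:ℝ)) := by
  have h0 := lev_sos (F := fun i => levG2 (1/(d:ℝ)) (φ i))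
  exact h0.trans (le_of_eq (Finset.sum_congr rfl fun i _ =>
    Finset.sum_congr rfl fun j _ => lev_pair2 hd _ _ (hφ i) (hφ j)))

end LevensteinAux


/-- Levenstein bound, real case: any `n > d(d+1)/2` unit vectors in `ℝ^d`
(`d ≥ 2`) satisfy `μ(Φ) ≥ √((3n − d(d+2))/((n − d)(d + 2)))`. -/
theorem levenstein_bound_real {d n : ℕ} (hd : 2 ≤ d) (hn : d * (d + 1) / 2 < n)
    (Φ : Fin n → EuclideanSpace ℝ (Fin d))
    (hunit : ∀ j, ‖Φ j‖ = 1) :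
    Real.sqrt ((3 * (n : ℝ) - d * ((d : ℝ) + 2)) / (((n : ℝ) - d) * ((d : ℝ) + 2)))
      ≤ coherence Φ := by
  classical
  have hdR : (2:ℝ) ≤ (d:ℝ) := by exact_mod_cast hd
  have hnn : d * (d + 1) < 2 * n := by
    have h2 : d * (d + 1) / 2 * 2 = d * (d + 1) := Nat.div_mul_cancel ((Nat.even_mul_succ_self d).two_dvd)
    omega
  have hNd : (d:ℝ) * ((d:ℝ) + 1) < 2 * (n:ℝ) := by exact_mod_cast hnn
  have hD0 : (0:ℝ) < (d:ℝ) := by linarith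
  have hD2 : (0:ℝ) < (d:ℝ) + 2 := by linarith
  have hn_d : (d:ℝ) < (n:ℝ) := by nlinarith
  have hN0 : (0:ℝ) < (n:ℝ) := by linarith
  have hden : (0:ℝ) < ((n:ℝ) - (d:ℝ)) * ((d:ℝ) + 2) := by
    apply mul_pos <;> linarith
  -- inner products as coordinate sums
  have hs : ∀ i j, (inner ℝ (Φ i) (Φ j) : ℝ) = ∑ a, Φ i a * Φ j a := fun i j => by
    simp [PiLp.inner_apply, mul_comm]
  have hφunit : ∀ i, ∑ a, Φ i a * Φ i a = 1 := fun i => by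
    rw [← hs i i, real_inner_self_eq_norm_mul_norm, hunit, one_mul]
  set μ := coherence Φ with hμdef
  have hμ0 : 0 ≤ μ := NNReal.coe_nonneg _
  have hμb : ∀ i j, i ≠ j → |∑ a, Φ i a * Φ j a| ≤ μ := by
    intro i j hij
    rw [← hs i j]
    have hm : (i, j) ∈ Finset.univ.filter (fun p : Fin n × Fin n => p.1 ≠ p.2) :=
      Finset.mem_filter.mpr ⟨Finset.mem_univ _, hij⟩
    have h1 := Finset.le_sup (f := fun p : Fin n × Fin n =>
      ‖(inner ℝ (Φ p.1) (Φ p.2) : ℝ)‖₊) hm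
    have h2 : (‖(inner ℝ (Φ i) (Φ j) : ℝ)‖₊ : ℝ) ≤ μ := by
      rw [hμdef]
      exact_mod_cast h1
    calc |(inner ℝ (Φ i) (Φ j) : ℝ)| = (‖(inner ℝ (Φ i) (Φ j) : ℝ)‖₊ : ℝ) := by
          rw [coe_nnnorm, Real.norm_eq_abs]
      _ ≤ μ := h2
  set s : Fin n → Fin n → ℝ := fun i j => ∑ a, Φ i a * Φ j a with hsdef
  set M1 := ∑ i, ∑ j, (s i j)^2 with hM1
  set M2 := ∑ i, ∑ j, (s i j)^4 with hM2
  -- Fact A : n^2 ≤ d * M1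
  have hA : (n:ℝ)^2 ≤ (d:ℝ) * M1 := by
    have h0 := lev_factA (by omega : 0 < d) (fun i => (Φ i : Fin d → ℝ)) hφunit
    have h1 : ∑ i, ∑ j, ((s i j)^2 - 1/(d:ℝ)) = M1 - (n:ℝ)^2 * (1/(d:ℝ)) := by
      simp only [Finset.sum_sub_distrib, Finset.sum_const, Finset.card_univ,
        Fintype.card_fin, nsmul_eq_mul]
      rw [hM1]; ring
    rw [h1] at h0
    have : (n:ℝ)^2 * (1/(d:ℝ)) ≤ M1 := by linarith
    rw [mul_one_div, div_le_iff₀ hD0] at this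
    linarith
  -- Fact B : 3 * M1 ≤ (d+2) * M2
  have hB : 3 * M1 ≤ ((d:ℝ) + 2) * M2 := by
    have h0 := lev_factB (fun i => (Φ i : Fin d → ℝ)) hφunit
    have h1 : ∑ i, ∑ j, ((s i j)^4 - 3/((d:ℝ)+2) * (s i j)^2)
        = M2 - 3/((d:ℝ)+2) * M1 := by
      simp only [Finset.sum_sub_distrib, ← Finset.mul_sum]
      rw [hM1, hM2]
    rw [h1] at h0
    have h2 : 3/((d:ℝ)+2) * M1 ≤ M2 := by linarith
    rw [div_mul_eq_mul_div, div_le_iff₀ hD2] at h2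
    linarith
  -- Fact C : M2 - μ^2 M1 ≤ n (1 - μ^2)
  have hC : M2 - μ^2 * M1 ≤ (n:ℝ) * (1 - μ^2) := by
    have h1 : ∑ i, ∑ j, ((s i j)^4 - μ^2 * (s i j)^2)
        ≤ ∑ i : Fin n, ∑ j : Fin n, (if i = j then 1 - μ^2 else (0:ℝ)) := by
      refine Finset.sum_le_sum fun i _ => Finset.sum_le_sum fun j _ => ?_
      by_cases h : i = j
      · subst h
        rw [if_pos rfl]
        have hsii : s i i = 1 := hφunit i
        rw [hsii]; ring_nf; norm_num
      · rw [if_neg h]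
        have h1 : |s i j| ≤ μ := hμb i j h
        have h2 : (s i j)^2 ≤ μ^2 := by
          rw [← sq_abs]
          exact pow_le_pow_left₀ (abs_nonneg _) h1 2
        nlinarith [sq_nonneg (s i j)]
    have h2 : ∑ i : Fin n, ∑ j : Fin n, (if i = j then 1 - μ^2 else (0:ℝ)) = (n:ℝ) * (1 - μ^2) := by
      simp only [Finset.sum_ite_eq, Finset.mem_univ, if_true, Finset.sum_const,
        Finset.card_univ, Fintype.card_fin, nsmul_eq_mul]
    have h3 : ∑ i, ∑ j, ((s i j)^4 - μ^2 * (s i j)^2) = M2 - μ^2 * M1 := by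
      simp only [Finset.sum_sub_distrib, ← Finset.mul_sum]
      rw [hM1, hM2]
    linarith [h1.trans_eq h2, h3.symm.trans_le (h1.trans_eq h2)]
  -- combine
  have htarget : (3 * (n : ℝ) - d * ((d : ℝ) + 2)) / (((n : ℝ) - d) * ((d : ℝ) + 2)) ≤ μ^2 := by
    rw [div_le_iff₀ hden]
    rcases le_or_gt 3 (((d:ℝ)+2) * μ^2) with hc | hc
    · nlinarith [mul_le_mul_of_nonneg_right hc (by linarith : (0:ℝ) ≤ (n:ℝ) - (d:ℝ))]
    · -- (3 - (d+2)μ²) M1 ≤ (d+2) n (1-μ²), M1 ≥ n²/d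
      have k1 : (3 - ((d:ℝ)+2) * μ^2) * ((d:ℝ) * M1) ≤ ((d:ℝ)+2) * ((d:ℝ)) * (M2 - μ^2 * M1) := by
        nlinarith [mul_le_mul_of_nonneg_left hB hD0.le]
      have k2 : ((d:ℝ)+2) * ((d:ℝ)) * (M2 - μ^2 * M1) ≤ ((d:ℝ)+2) * ((d:ℝ)) * ((n:ℝ) * (1 - μ^2)) :=
        mul_le_mul_of_nonneg_left hC (by positivity)
      have k3 : (3 - ((d:ℝ)+2) * μ^2) * ((n:ℝ)^2) ≤ (3 - ((d:ℝ)+2) * μ^2) * ((d:ℝ) * M1) :=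
        mul_le_mul_of_nonneg_left hA (by linarith)
      have k4 : (3 - ((d:ℝ)+2) * μ^2) * ((n:ℝ)^2) ≤ ((d:ℝ)+2) * ((d:ℝ)) * ((n:ℝ) * (1 - μ^2)) :=
        k3.trans (k1.trans k2)
      have k5 : (3 * (n : ℝ) - d * ((d : ℝ) + 2)) * (n:ℝ) ≤ (μ^2 * (((n:ℝ) - d) * ((d:ℝ) + 2))) * (n:ℝ) := by
        nlinarith [k4]
      exact le_of_mul_le_mul_right k5 hN0
  calc Real.sqrt ((3 * (n : ℝ) - d * ((d : ℝ) + 2)) / (((n : ℝ) - d) * ((d : ℝ) + 2)))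
      ≤ Real.sqrt (μ^2) := Real.sqrt_le_sqrt htarget
    _ = μ := by rw [Real.sqrt_sq hμ0]
end

section
/- (Welch's higher-order bound) Let d, n, t be positive integers with n > d ≥ 2, and let Φ = (φ_1, …, φ_n) be any family of unit vectors in ℂ^d. Then μ(Φ)^{2t} ≥ (1/(n−1)) · (n / C(d+t−1, t) − 1), where C(d+t−1, t) denotes the binomial coefficient. -/
lemma conj_mul_self_c (z : ℂ) : (starRingEnd ℂ) z * z = ((‖z‖ : ℝ) : ℂ) ^ 2 := by
  rw [mul_comm, Complex.mul_conj, ← Complex.ofReal_pow, Complex.sq_norm]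

lemma mul_conj_self_c (z : ℂ) : z * (starRingEnd ℂ) z = ((‖z‖ : ℝ) : ℂ) ^ 2 := by
  rw [mul_comm, conj_mul_self_c]

/-- The symmetric-tensor-like embedding via monomials with multinomial weights. -/
noncomputable def psiW {d : ℕ} (t : ℕ) (x : EuclideanSpace ℂ (Fin d))
    (m : Sym (Fin d) t) : ℂ :=
  ((Real.sqrt m.1.countPerms : ℝ) : ℂ) * (m.1.map x).prod

lemma psiW_inner {d : ℕ} (t : ℕ) (x y : EuclideanSpace ℂ (Fin d)) :
    ∑ m : Sym (Fin d) t, (starRingEnd ℂ) (psiW t x m) * psiW t y m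
      = (inner ℂ x y : ℂ) ^ t := by
  have h : (inner ℂ x y : ℂ) = ∑ i : Fin d, (starRingEnd ℂ) (x i) * y i := by
    simp [PiLp.inner_apply, RCLike.inner_apply]
    exact Finset.sum_congr rfl fun i _ => mul_comm _ _
  rw [h]
  rw [show (∑ i : Fin d, (starRingEnd ℂ) (x i) * y i)
      = Finset.univ.sum (fun i : Fin d => (starRingEnd ℂ) (x i) * y i) from rfl,
    Finset.sum_pow, Finset.sym_univ]
  refine Finset.sum_congr rfl fun m _ => ?_
  simp only [psiW, map_mul, Complex.conj_ofReal]
  rw [map_multiset_prod, Multiset.map_map, mul_mul_mul_comm, ← Multiset.prod_map_mul,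
    ← Complex.ofReal_mul, Real.mul_self_sqrt (by positivity)]
  push_cast
  rfl

/-- Welch's higher-order bound: any `n > d ≥ 2` unit vectors in `ℂ^d` satisfy
`μ(Φ)^(2t) ≥ (1/(n−1)) (n/C(d+t−1, t) − 1)` for every positive integer `t`. -/
theorem welch_higher_order_bound {d n t : ℕ} (hd : 2 ≤ d) (hn : d < n) (ht : 0 < t)
    (Φ : Fin n → EuclideanSpace ℂ (Fin d))
    (hunit : ∀ j, ‖Φ j‖ = 1) :
    (1 / ((n : ℝ) - 1)) * ((n : ℝ) / (Nat.choose (d + t - 1) t : ℝ) - 1)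
      ≤ coherence Φ ^ (2 * t) := by
  classical
  set ψ : Fin n → Sym (Fin d) t → ℂ := fun j => psiW t (Φ j) with hψ
  set A : Fin n → Fin n → ℂ := fun j k => (inner ℂ (Φ j) (Φ k) : ℂ) with hAdef
  have hA : ∀ j k, ∑ m : Sym (Fin d) t, (starRingEnd ℂ) (ψ j m) * ψ k m = (A j k) ^ t :=
    fun j k => psiW_inner t (Φ j) (Φ k)
  have hAjj : ∀ j, A j j = 1 := by
    intro j
    show (inner ℂ (Φ j) (Φ j) : ℂ) = 1
    rw [inner_self_eq_norm_sq_to_K, hunit j]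
    norm_num
  have hcard : (Fintype.card (Sym (Fin d) t) : ℝ) = (Nat.choose (d + t - 1) t : ℝ) := by
    rw [Sym.card_sym_eq_choose, Fintype.card_fin]
  set D : ℕ := Fintype.card (Sym (Fin d) t) with hD
  set f : Sym (Fin d) t → ℝ := fun m => ∑ j, ‖ψ j m‖ ^ 2 with hf
  have hsum_f : ∑ m, f m = (n : ℝ) := by
    have key : ((∑ m, f m : ℝ) : ℂ) = (n : ℝ) := by
      push_cast [hf]
      rw [Finset.sum_comm]
      calc ∑ j : Fin n, ∑ m : Sym (Fin d) t, ((‖ψ j m‖ : ℝ) : ℂ) ^ 2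
          = ∑ j : Fin n, ∑ m : Sym (Fin d) t, (starRingEnd ℂ) (ψ j m) * ψ j m := by
            refine Finset.sum_congr rfl fun j _ => Finset.sum_congr rfl fun m _ =>
              (conj_mul_self_c _).symm
        _ = ∑ j : Fin n, (A j j) ^ t := Finset.sum_congr rfl fun j _ => hA j j
        _ = (n : ℝ) := by simp [hAjj]
    exact_mod_cast key
  have hcs : ((n : ℝ)) ^ 2 ≤ (D : ℝ) * ∑ m, (f m) ^ 2 := by
    have h := sq_sum_le_card_mul_sum_sq (s := (Finset.univ : Finset (Sym (Fin d) t))) (f := f)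
    rw [hsum_f] at h
    simpa [hD, Finset.card_univ] using h
  set M : Sym (Fin d) t → Sym (Fin d) t → ℂ :=
    fun a b => ∑ j, ψ j a * (starRingEnd ℂ) (ψ j b) with hM
  have hMdiag : ∀ a, M a a = ((f a : ℝ) : ℂ) := by
    intro a
    push_cast [hM, hf]
    exact Finset.sum_congr rfl fun j _ => mul_conj_self_c _
  have hdiag_le : ∑ m, (f m) ^ 2 ≤ ∑ a, ∑ b, ‖M a b‖ ^ 2 := by
    refine Finset.sum_le_sum fun a _ => ?_
    have h1 : (f a) ^ 2 = ‖M a a‖ ^ 2 := by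
      rw [hMdiag a, Complex.norm_real]
      rw [Real.norm_eq_abs, sq_abs]
    rw [h1]
    exact Finset.single_le_sum (f := fun b => ‖M a b‖ ^ 2) (fun b _ => by positivity)
      (Finset.mem_univ a)
  have hexch : ∑ a, ∑ b, ‖M a b‖ ^ 2 = ∑ j, ∑ k, ‖A j k‖ ^ (2 * t) := by
    have key : ((∑ a, ∑ b, ‖M a b‖ ^ 2 : ℝ) : ℂ)
        = ((∑ j, ∑ k, ‖A j k‖ ^ (2 * t) : ℝ) : ℂ) := by
      push_cast
      calc ∑ a, ∑ b, ((‖M a b‖ : ℝ) : ℂ) ^ 2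
          = ∑ a, ∑ b, ∑ q : Fin n × Fin n,
              (ψ q.1 a * (starRingEnd ℂ) (ψ q.1 b)) *
              ((starRingEnd ℂ) (ψ q.2 a) * ψ q.2 b) := by
            refine Finset.sum_congr rfl fun a _ => Finset.sum_congr rfl fun b _ => ?_
            rw [← mul_conj_self_c (M a b)]
            nth_rewrite 1 [hM]
            rw [show (starRingEnd ℂ) (M a b)
              = ∑ j, (starRingEnd ℂ) (ψ j a * (starRingEnd ℂ) (ψ j b)) from map_sum _ _ _]
            rw [Finset.sum_mul_sum, ← Fintype.sum_prod_type']
            refine Finset.sum_congr rfl fun q _ => ?_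
            simp only [map_mul, Complex.conj_conj]
        _ = ∑ a, ∑ q : Fin n × Fin n, ∑ b,
              (ψ q.1 a * (starRingEnd ℂ) (ψ q.1 b)) *
              ((starRingEnd ℂ) (ψ q.2 a) * ψ q.2 b) :=
            Finset.sum_congr rfl fun a _ => Finset.sum_comm
        _ = ∑ q : Fin n × Fin n, ∑ a, ∑ b,
              (ψ q.1 a * (starRingEnd ℂ) (ψ q.1 b)) *
              ((starRingEnd ℂ) (ψ q.2 a) * ψ q.2 b) := Finset.sum_comm
        _ = ∑ q : Fin n × Fin n,
              ((starRingEnd ℂ) ((A q.1 q.2) ^ t)) * ((A q.1 q.2) ^ t) := by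
            refine Finset.sum_congr rfl fun q _ => ?_
            have expand : ∑ a, ∑ b,
                (ψ q.1 a * (starRingEnd ℂ) (ψ q.1 b)) *
                ((starRingEnd ℂ) (ψ q.2 a) * ψ q.2 b)
                = (∑ a, ψ q.1 a * (starRingEnd ℂ) (ψ q.2 a)) *
                  (∑ b, (starRingEnd ℂ) (ψ q.1 b) * ψ q.2 b) := by
              rw [Finset.sum_mul_sum]
              exact Finset.sum_congr rfl fun a _ => Finset.sum_congr rfl fun b _ => by ring
            have hconj : ∑ a, ψ q.1 a * (starRingEnd ℂ) (ψ q.2 a)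
                = (starRingEnd ℂ) ((A q.1 q.2) ^ t) := by
              rw [← hA q.1 q.2, map_sum]
              refine Finset.sum_congr rfl fun a _ => ?_
              simp only [map_mul, Complex.conj_conj]
            rw [expand, hconj, hA q.1 q.2]
        _ = ∑ j, ∑ k, ((‖A j k‖ : ℝ) : ℂ) ^ (2 * t) := by
            rw [← Fintype.sum_prod_type']
            refine Finset.sum_congr rfl fun q _ => ?_
            rw [conj_mul_self_c, ← Complex.ofReal_pow, ← Complex.ofReal_pow, norm_pow,
              ← pow_mul, mul_comm t 2]
    exact_mod_cast key
  set μ : ℝ := coherence Φ with hμ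
  have hμ0 : 0 ≤ μ := NNReal.coe_nonneg _
  have hμle : ∀ j k : Fin n, j ≠ k → ‖A j k‖ ≤ μ := by
    intro j k hjk
    have hmem : ((j, k) : Fin n × Fin n) ∈
        Finset.univ.filter fun p : Fin n × Fin n => p.1 ≠ p.2 := by
      simp [hjk]
    have h := Finset.le_sup (f := fun p : Fin n × Fin n =>
      ‖(inner ℂ (Φ p.1) (Φ p.2) : ℂ)‖₊) hmem
    exact_mod_cast h
  have hS_le : ∑ j, ∑ k, ‖A j k‖ ^ (2 * t)
      ≤ (n : ℝ) + ((n : ℝ) * n - n) * μ ^ (2 * t) := by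
    rw [← Fintype.sum_prod_type']
    have hsplit : (Finset.univ : Finset (Fin n × Fin n))
        = (Finset.univ : Finset (Fin n)).diag ∪ (Finset.univ : Finset (Fin n)).offDiag := by
      rw [Finset.diag_union_offDiag, Finset.univ_product_univ]
    rw [hsplit, Finset.sum_union (Finset.disjoint_diag_offDiag _)]
    have h1 : ∑ p ∈ (Finset.univ : Finset (Fin n)).diag, ‖A p.1 p.2‖ ^ (2 * t) = (n : ℝ) := by
      rw [Finset.sum_congr rfl (fun p hp => ?_)]
      · rw [Finset.sum_const, Finset.diag_card, Finset.card_univ, Fintype.card_fin,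
          nsmul_eq_mul, mul_one]
      · obtain ⟨-, h2⟩ := Finset.mem_diag.1 hp
        rw [← h2, hAjj p.1, norm_one, one_pow]
    have h2 : ∑ p ∈ (Finset.univ : Finset (Fin n)).offDiag, ‖A p.1 p.2‖ ^ (2 * t)
        ≤ ((n : ℝ) * n - n) * μ ^ (2 * t) := by
      have hle : ∀ p ∈ (Finset.univ : Finset (Fin n)).offDiag,
          ‖A p.1 p.2‖ ^ (2 * t) ≤ μ ^ (2 * t) := by
        intro p hp
        obtain ⟨-, -, hne⟩ := Finset.mem_offDiag.1 hp
        exact pow_le_pow_left₀ (norm_nonneg _) (hμle p.1 p.2 hne) _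
      calc ∑ p ∈ (Finset.univ : Finset (Fin n)).offDiag, ‖A p.1 p.2‖ ^ (2 * t)
          ≤ ∑ _p ∈ (Finset.univ : Finset (Fin n)).offDiag, μ ^ (2 * t) :=
            Finset.sum_le_sum hle
        _ = ((n : ℝ) * n - n) * μ ^ (2 * t) := by
            rw [Finset.sum_const, Finset.offDiag_card, Finset.card_univ, Fintype.card_fin,
              nsmul_eq_mul]
            congr 1
            have hnn : n ≤ n * n := Nat.le_mul_of_pos_left n (by omega)
            push_cast [Nat.cast_sub hnn]
            ring
    rw [h1]
    exact add_le_add_right h2 _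
  have hDpos : (0 : ℝ) < D := by
    have hDeq : D = (d + t - 1).choose t := by
      rw [hD, Sym.card_sym_eq_choose, Fintype.card_fin]
    have h : 0 < D := by
      rw [hDeq]; exact Nat.choose_pos (by omega)
    exact_mod_cast h
  have hmain : (n : ℝ) ^ 2 ≤ (D : ℝ) * ((n : ℝ) + ((n : ℝ) * n - n) * μ ^ (2 * t)) := by
    calc (n : ℝ) ^ 2 ≤ (D : ℝ) * ∑ m, (f m) ^ 2 := hcs
      _ ≤ (D : ℝ) * (∑ a, ∑ b, ‖M a b‖ ^ 2) :=
          mul_le_mul_of_nonneg_left hdiag_le (le_of_lt hDpos)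
      _ = (D : ℝ) * (∑ j, ∑ k, ‖A j k‖ ^ (2 * t)) := by rw [hexch]
      _ ≤ (D : ℝ) * ((n : ℝ) + ((n : ℝ) * n - n) * μ ^ (2 * t)) :=
          mul_le_mul_of_nonneg_left hS_le (le_of_lt hDpos)
  have hn3 : 2 < n := lt_of_le_of_lt hd hn
  have hn1 : (1 : ℝ) < (n : ℝ) := by exact_mod_cast Nat.one_lt_cast.2 (by omega)
  have hn1' : (0 : ℝ) < (n : ℝ) - 1 := by linarith
  have hnpos : (0 : ℝ) < (n : ℝ) := by linarith
  rw [← hcard]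
  rw [one_div, inv_mul_le_iff₀ hn1', div_sub' (ne_of_gt hDpos), div_le_iff₀ hDpos]
  nlinarith [hmain, mul_pos hnpos hn1', hDpos, mul_nonneg hμ0 hμ0]
end
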